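/- arXiv:2408.05232 — 5 statements merged into one kernel-verified Lean document; each statement's English description precedes it below -/
import Mathlib

section
/- Suppose w : ℝⁿ → ℂ is almost periodic (a uniform limit of trigonometric polynomials), takes values in ℝ^{≥0}, and has mean value M(w) = 0. Then w = 0 identically. -/
open MeasureTheory Filter

/-- A bounded measurable `w : ℝⁿ → ℂ` has *mean value* `M` if
`T⁻ⁿ ∫_{[0,T]ⁿ} w(s) ds → M` as `T → ∞`. -/
def HasMeanValue {n : ℕ} (w : (Fin n → ℝ) → ℂ) (M : ℂ) : Prop :=
  Tendsto (fun T : ℝ =>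
      ((T : ℂ) ^ n)⁻¹ * ∫ s in Set.Icc (0 : Fin n → ℝ) (fun _ => T), w s)
    atTop (nhds M)

/-- A *trigonometric polynomial* on `ℝⁿ` is a finite `ℂ`-linear combination of the
characters `s ↦ e^{i(α·s)}`, `α ∈ ℝⁿ`. -/
def IsTrigPoly {n : ℕ} (p : (Fin n → ℝ) → ℂ) : Prop :=
  ∃ (A : Finset (Fin n → ℝ)) (c : (Fin n → ℝ) → ℂ),
    ∀ s, p s = ∑ α ∈ A, c α * Complex.exp (Complex.I * (↑(∑ i, α i * s i) : ℂ))

/-- `w : ℝⁿ → ℂ` is *almost periodic* (in the sense of Bohr) if it is a uniform limit of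
trigonometric polynomials. -/
def AlmostPeriodic {n : ℕ} (w : (Fin n → ℝ) → ℂ) : Prop :=
  ∀ ε : ℝ, 0 < ε → ∃ p, IsTrigPoly p ∧ ∀ s, ‖w s - p s‖ ≤ ε

private lemma norm_exp_I_real (x : ℝ) : ‖Complex.exp (Complex.I * x)‖ = 1 := by
  rw [Complex.norm_exp]
  simp [Complex.mul_re]

private lemma exp_I_sub (x y : ℝ) :
    Complex.exp (Complex.I * ((x - y : ℝ) : ℂ)) - 1
      = (Complex.exp (Complex.I * x) - Complex.exp (Complex.I * y))
        * Complex.exp (-(Complex.I * y)) := by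
  rw [sub_mul, ← Complex.exp_add, ← Complex.exp_add]
  push_cast
  ring_nf
  simp [Complex.exp_neg]
  ring

private lemma norm_exp_I_sub_le (x y : ℝ) (h : |x - y| ≤ 1) :
    ‖Complex.exp (Complex.I * x) - Complex.exp (Complex.I * y)‖ ≤ 2 * |x - y| := by
  have h1 : Complex.exp (Complex.I * x) - Complex.exp (Complex.I * y)
      = (Complex.exp (Complex.I * ((x - y : ℝ) : ℂ)) - 1) * Complex.exp (Complex.I * y) := by
    rw [sub_mul, ← Complex.exp_add, one_mul]
    push_cast; ring_nf
  rw [h1, norm_mul, norm_exp_I_real, mul_one]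
  have h2 : ‖Complex.I * ((x - y : ℝ) : ℂ)‖ = |x - y| := by
    rw [norm_mul, Complex.norm_I, one_mul, Complex.norm_real, Real.norm_eq_abs]
  calc ‖Complex.exp (Complex.I * ((x - y : ℝ) : ℂ)) - 1‖
      ≤ 2 * ‖Complex.I * ((x - y : ℝ) : ℂ)‖ :=
        Complex.norm_exp_sub_one_le (by rw [h2]; exact h)
    _ = 2 * |x - y| := by rw [h2]

private lemma trigPoly_continuous {n : ℕ} {p : (Fin n → ℝ) → ℂ} (hp : IsTrigPoly p) :
    Continuous p := by
  obtain ⟨A, c, hc⟩ := hp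
  have : p = fun s => ∑ α ∈ A, c α * Complex.exp (Complex.I * (↑(∑ i, α i * s i) : ℂ)) :=
    funext hc
  rw [this]
  refine continuous_finset_sum _ fun α _ => ?_
  refine continuous_const.mul (Complex.continuous_exp.comp (continuous_const.mul ?_))
  exact Complex.continuous_ofReal.comp (continuous_finset_sum _ fun i _ =>
    (continuous_const.mul (continuous_apply i)))

private lemma ap_continuous {n : ℕ} {w : (Fin n → ℝ) → ℂ} (hap : AlmostPeriodic w) :
    Continuous w := by
  choose p hp hb using fun k : ℕ => hap (1 / (k + 1)) (by positivity)
  have : TendstoUniformly p w atTop := by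
    rw [Metric.tendstoUniformly_iff]
    intro ε hε
    obtain ⟨N, hN⟩ := exists_nat_one_div_lt hε
    filter_upwards [eventually_ge_atTop N] with k hk s
    rw [dist_eq_norm]
    calc ‖w s - p k s‖ ≤ 1 / (k + 1) := hb k s
      _ ≤ 1 / (N + 1) := by
          apply one_div_le_one_div_of_le (by positivity)
          exact_mod_cast Nat.succ_le_succ hk
      _ < ε := hN
  exact this.continuous (Eventually.of_forall fun k => trigPoly_continuous (hp k)).frequently

private lemma dense_almost_periods {n : ℕ} (A : Finset (Fin n → ℝ)) {η : ℝ} (hη : 0 < η) :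
    ∃ L : ℝ, 0 ≤ L ∧ ∀ t : Fin n → ℝ, ∃ τ : Fin n → ℝ, ‖t - τ‖ ≤ L ∧
      ∀ α ∈ A, ‖Complex.exp (Complex.I * (↑(∑ i, α i * τ i) : ℂ)) - 1‖ ≤ η := by
  set f : (Fin n → ℝ) → (↥A → ℂ) :=
    fun t α => Complex.exp (Complex.I * (↑(∑ i, (α : Fin n → ℝ) i * t i) : ℂ)) with hf
  have hK : IsCompact (Set.univ.pi fun _ : ↥A => Metric.closedBall (0:ℂ) 1) :=
    isCompact_univ_pi fun _ => isCompact_closedBall _ _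
  have hsub : closure (Set.range f) ⊆ Set.univ.pi fun _ => Metric.closedBall (0:ℂ) 1 := by
    apply closure_minimal _ (isClosed_set_pi fun _ _ => Metric.isClosed_closedBall)
    rintro _ ⟨t, rfl⟩ α _
    simp only [Metric.mem_closedBall, dist_zero_right]
    exact le_of_eq (norm_exp_I_real _)
  have hcc : IsCompact (closure (Set.range f)) :=
    hK.of_isClosed_subset isClosed_closure hsub
  have hcov : closure (Set.range f) ⊆ ⋃ t : Fin n → ℝ, Metric.ball (f t) η := by
    intro x hx
    obtain ⟨y, hy, hd⟩ := Metric.mem_closure_iff.mp hx η hη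
    obtain ⟨t, rfl⟩ := hy
    exact Set.mem_iUnion.mpr ⟨t, by rwa [Metric.mem_ball]⟩
  obtain ⟨s, hs⟩ := hcc.elim_finite_subcover _ (fun t => Metric.isOpen_ball) hcov
  refine ⟨(↑(s.sup fun t => ‖t‖₊) : ℝ), NNReal.coe_nonneg _, fun t => ?_⟩
  have hmem : f t ∈ ⋃ t' ∈ s, Metric.ball (f t') η :=
    hs (subset_closure (Set.mem_range_self t))
  obtain ⟨t₀, ht₀s, ht₀⟩ := Set.mem_iUnion₂.mp hmem
  refine ⟨t - t₀, ?_, fun α hα => ?_⟩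
  · rw [sub_sub_cancel, ← coe_nnnorm]
    exact_mod_cast Finset.le_sup (f := fun t => ‖t‖₊) ht₀s
  · have hsum : (∑ i, α i * (t - t₀) i)
        = (∑ i, α i * t i) - (∑ i, α i * t₀ i) := by
      rw [← Finset.sum_sub_distrib]
      exact Finset.sum_congr rfl fun i _ => by simp [mul_sub]
    rw [hsum, exp_I_sub, norm_mul]
    have h1 : ‖Complex.exp (-(Complex.I * ((∑ i, α i * t₀ i : ℝ) : ℂ)))‖ = 1 := by
      have := norm_exp_I_real (-(∑ i, α i * t₀ i))
      rwa [Complex.ofReal_neg, mul_neg] at this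
    rw [h1, mul_one]
    have h2 : ‖f t ⟨α, hα⟩ - f t₀ ⟨α, hα⟩‖ ≤ dist (f t) (f t₀) := by
      rw [← dist_eq_norm]
      exact dist_le_pi_dist (f t) (f t₀) ⟨α, hα⟩
    have h3 : dist (f t) (f t₀) < η := Metric.mem_ball.mp ht₀
    exact le_of_lt (lt_of_le_of_lt (by simpa [hf] using h2) h3)

private lemma dot_sub_le {n : ℕ} (α x y : Fin n → ℝ) :
    |(∑ i, α i * x i) - (∑ i, α i * y i)| ≤ (∑ i, |α i|) * ‖x - y‖ := by
  have : (∑ i, α i * x i) - (∑ i, α i * y i) = ∑ i, α i * (x - y) i := by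
    rw [← Finset.sum_sub_distrib]
    exact Finset.sum_congr rfl fun i _ => by simp [mul_sub]
  rw [this]
  refine (Finset.abs_sum_le_sum_abs _ _).trans ?_
  rw [Finset.sum_mul]
  refine Finset.sum_le_sum fun i _ => ?_
  rw [abs_mul]
  exact mul_le_mul_of_nonneg_left (norm_le_pi_norm (x - y) i) (abs_nonneg _)

private lemma trans_p {n : ℕ} (A : Finset (Fin n → ℝ)) (c : (Fin n → ℝ) → ℂ) (τ : Fin n → ℝ)
    {η : ℝ}
    (h : ∀ α ∈ A, ‖Complex.exp (Complex.I * (↑(∑ i, α i * τ i) : ℂ)) - 1‖ ≤ η) (s : Fin n → ℝ) :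
    ‖(∑ α ∈ A, c α * Complex.exp (Complex.I * (↑(∑ i, α i * (s + τ) i) : ℂ)))
      - ∑ α ∈ A, c α * Complex.exp (Complex.I * (↑(∑ i, α i * s i) : ℂ))‖
      ≤ (∑ α ∈ A, ‖c α‖) * η := by
  rw [← Finset.sum_sub_distrib, Finset.sum_mul]
  refine (norm_sum_le _ _).trans (Finset.sum_le_sum fun α hα => ?_)
  have hd : ∑ i, α i * (s + τ) i = (∑ i, α i * s i) + (∑ i, α i * τ i) := by
    rw [← Finset.sum_add_distrib]
    exact Finset.sum_congr rfl fun i _ => by simp [mul_add]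
  have he : Complex.exp (Complex.I * (↑(∑ i, α i * (s + τ) i) : ℂ))
      = Complex.exp (Complex.I * (↑(∑ i, α i * s i) : ℂ))
        * Complex.exp (Complex.I * (↑(∑ i, α i * τ i) : ℂ)) := by
    rw [hd, ← Complex.exp_add]; push_cast; ring_nf
  rw [he, ← mul_sub, norm_mul]
  have hfac : Complex.exp (Complex.I * (↑(∑ i, α i * s i) : ℂ))
        * Complex.exp (Complex.I * (↑(∑ i, α i * τ i) : ℂ))
      - Complex.exp (Complex.I * (↑(∑ i, α i * s i) : ℂ))
      = Complex.exp (Complex.I * (↑(∑ i, α i * s i) : ℂ))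
        * (Complex.exp (Complex.I * (↑(∑ i, α i * τ i) : ℂ)) - 1) := by ring
  rw [hfac, norm_mul, norm_exp_I_real, one_mul]
  exact mul_le_mul_of_nonneg_left (h α hα) (norm_nonneg _)

private lemma lip_p {n : ℕ} (A : Finset (Fin n → ℝ)) (c : (Fin n → ℝ) → ℂ) (x y : Fin n → ℝ)
    (h1 : ∀ α ∈ A, |(∑ i, α i * x i) - (∑ i, α i * y i)| ≤ 1) :
    ‖(∑ α ∈ A, c α * Complex.exp (Complex.I * (↑(∑ i, α i * x i) : ℂ)))
      - ∑ α ∈ A, c α * Complex.exp (Complex.I * (↑(∑ i, α i * y i) : ℂ))‖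
      ≤ ∑ α ∈ A, ‖c α‖ * (2 * ((∑ i, |α i|) * ‖x - y‖)) := by
  rw [← Finset.sum_sub_distrib]
  refine (norm_sum_le _ _).trans (Finset.sum_le_sum fun α hα => ?_)
  rw [← mul_sub, norm_mul]
  refine mul_le_mul_of_nonneg_left ?_ (norm_nonneg _)
  refine (norm_exp_I_sub_le _ _ (h1 α hα)).trans ?_
  refine mul_le_mul_of_nonneg_left ?_ (by norm_num)
  exact dot_sub_le α x y

private lemma re_ge_of_close (z z' : ℂ) {ε : ℝ} (h : ‖z - z'‖ ≤ ε) : z'.re - ε ≤ z.re := by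
  have h1 : |(z' - z).re| ≤ ‖z' - z‖ := Complex.abs_re_le_norm (z' - z)
  have h2 : ‖z' - z‖ = ‖z - z'‖ := norm_sub_rev _ _
  have h3 : (z' - z).re = z'.re - z.re := by simp
  have := abs_le.mp (h1.trans (le_of_eq h2) |>.trans h)
  linarith [this.2]


set_option maxHeartbeats 1000000 in
/-- Bohr's theorem: an almost periodic function `w : ℝⁿ → ℂ` with values in `ℝ^{≥0}`
and mean value `0` vanishes identically. -/
theorem stmt5 {n : ℕ} (hn : 1 ≤ n) (w : (Fin n → ℝ) → ℂ)
    (hap : AlmostPeriodic w)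
    (hnn : ∀ s, (w s).im = 0 ∧ 0 ≤ (w s).re)
    (hM : HasMeanValue w 0) :
    ∀ s, w s = 0 := by
  intro s₀
  by_contra h0
  set δ := (w s₀).re with hδdef
  have hδ : 0 < δ := by
    rcases lt_or_eq_of_le (hnn s₀).2 with h | h
    · exact h
    · exact absurd (Complex.ext (by rw [← h]; rfl) (by rw [(hnn s₀).1]; rfl)) h0
  obtain ⟨p, ⟨A, c, hpform⟩, hpw⟩ := hap (δ/8) (by positivity)
  set K₁ := ∑ α ∈ A, ‖c α‖ with hK₁def
  have hK₁0 : 0 ≤ K₁ := Finset.sum_nonneg fun _ _ => norm_nonneg _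
  set S₁ := ∑ α ∈ A, (∑ i, |α i|) with hS₁def
  have hS₁0 : 0 ≤ S₁ :=
    Finset.sum_nonneg fun _ _ => Finset.sum_nonneg fun _ _ => abs_nonneg _
  set K₂ := ∑ α ∈ A, ‖c α‖ * (∑ i, |α i|) with hK₂def
  have hK₂0 : 0 ≤ K₂ := Finset.sum_nonneg fun _ _ =>
    mul_nonneg (norm_nonneg _) (Finset.sum_nonneg fun _ _ => abs_nonneg _)
  obtain ⟨L, hL0, hL⟩ := dense_almost_periods A (η := δ/(8*(K₁+1))) (by positivity)
  set r := min (1/(S₁+1)) (δ/(8*(2*K₂+1))) with hrdef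
  have hr0 : 0 < r := lt_min (by positivity) (by positivity)
  set L' := L + ‖s₀‖ + r + 1 with hL'def
  have hL'1 : 1 ≤ L' := by
    have := norm_nonneg s₀; simp only [hL'def]; linarith
  have hL'0 : 0 < L' := lt_of_lt_of_le one_pos hL'1
  clear_value δ K₁ S₁ K₂ r L'
  -- key pointwise estimate
  have key : ∀ t : Fin n → ℝ, ∃ q : Fin n → ℝ, (∀ i, |q i - t i| ≤ L) ∧
      ∀ x ∈ Set.Icc (fun i => q i - r) (fun i => q i + r), δ/4 ≤ (w x).re := by
    intro t
    obtain ⟨τ, hτL, hτA⟩ := hL (t - s₀)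
    refine ⟨s₀ + τ, fun i => ?_, fun x hx => ?_⟩
    · have h1 : |(t - s₀ - τ) i| ≤ ‖t - s₀ - τ‖ := norm_le_pi_norm (t - s₀ - τ) i
      have h2 : (s₀ + τ) i - t i = -((t - s₀ - τ) i) := by simp; ring
      rw [h2, abs_neg]
      exact h1.trans hτL
    · -- translation bound for p
      have htp : ∀ s, ‖p (s + τ) - p s‖ ≤ δ/8 := by
        intro s
        rw [hpform, hpform]
        refine (trans_p A c τ hτA s).trans ?_
        have he : (∑ α ∈ A, ‖c α‖) * (δ / (8 * (K₁ + 1))) = K₁ * δ / (8 * (K₁ + 1)) := by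
          rw [← hK₁def]; ring
        rw [he, div_le_div_iff₀ (by linarith) (by norm_num)]
        nlinarith [hδ.le, hK₁0]
      have hwq : ‖w (s₀ + τ) - w s₀‖ ≤ 3 * (δ/8) := by
        have e1 : w (s₀ + τ) - w s₀ = (w (s₀ + τ) - p (s₀ + τ)) + (p (s₀ + τ) - p s₀)
            + (p s₀ - w s₀) := by ring
        calc ‖w (s₀ + τ) - w s₀‖
            ≤ ‖w (s₀ + τ) - p (s₀ + τ)‖ + ‖p (s₀ + τ) - p s₀‖ + ‖p s₀ - w s₀‖ := by
              rw [e1]; exact norm_add₃_le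
          _ ≤ δ/8 + δ/8 + δ/8 := by
              refine add_le_add (add_le_add (hpw _) (htp _)) ?_
              rw [norm_sub_rev]; exact hpw _
          _ = 3 * (δ/8) := by ring
      -- x close to q
      have hxq : ‖x - (s₀ + τ)‖ ≤ r := by
        rw [pi_norm_le_iff_of_nonneg hr0.le]
        intro i
        have h1 := hx.1 i
        have h2 := hx.2 i
        simp only [Pi.sub_apply] at *
        rw [Real.norm_eq_abs, abs_le]
        constructor <;> [linarith [h1]; linarith [h2]]
      have hpxq : ‖p x - p (s₀ + τ)‖ ≤ δ/8 := by
        rw [hpform, hpform]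
        have hsmall : ∀ α ∈ A, |(∑ i, α i * x i) - (∑ i, α i * (s₀ + τ) i)| ≤ 1 := by
          intro α hα
          refine (dot_sub_le α x (s₀ + τ)).trans ?_
          have h1 : (∑ i, |α i|) ≤ S₁ := by
            rw [hS₁def]
            exact Finset.single_le_sum (f := fun α : Fin n → ℝ => ∑ i, |α i|)
              (fun β _ => Finset.sum_nonneg fun _ _ => abs_nonneg _) hα
          have h2 : r ≤ 1/(S₁+1) := by rw [hrdef]; exact min_le_left _ _
          have h3 : (∑ i, |α i|) * ‖x - (s₀ + τ)‖ ≤ S₁ * r := by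
            apply mul_le_mul h1 hxq (norm_nonneg _) hS₁0
          refine h3.trans ?_
          have h6 : S₁ * r ≤ S₁ * (1/(S₁+1)) := mul_le_mul_of_nonneg_left h2 hS₁0
          refine h6.trans ?_
          rw [mul_one_div, div_le_one (by linarith)]
          linarith
        refine (lip_p A c x (s₀ + τ) hsmall).trans ?_
        have hb : ∀ α ∈ A, ‖c α‖ * (2 * ((∑ i, |α i|) * ‖x - (s₀ + τ)‖))
            ≤ ‖c α‖ * (∑ i, |α i|) * (2 * r) := by
          intro α hα
          have h4 : (∑ i, |α i|) * ‖x - (s₀ + τ)‖ ≤ (∑ i, |α i|) * r :=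
            mul_le_mul_of_nonneg_left hxq (Finset.sum_nonneg fun _ _ => abs_nonneg _)
          nlinarith [norm_nonneg (c α), Finset.sum_nonneg (fun i (_ : i ∈ Finset.univ) => abs_nonneg (α i)), hxq, norm_nonneg (x - (s₀ + τ))]
        refine (Finset.sum_le_sum hb).trans ?_
        rw [← Finset.sum_mul, ← hK₂def]
        have h5 : r ≤ δ/(8*(2*K₂+1)) := by rw [hrdef]; exact min_le_right _ _
        have h7 : K₂ * (2*r) ≤ K₂ * (2*(δ/(8*(2*K₂+1)))) := by nlinarith
        refine h7.trans ?_
        have h8 : K₂ * (2*(δ/(8*(2*K₂+1)))) = (2*K₂*δ) / (8*(2*K₂+1)) := by ring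
        rw [h8, div_le_div_iff₀ (by linarith) (by norm_num)]
        nlinarith [hδ.le, hK₂0]
      -- chain
      have c1 := re_ge_of_close (w x) (p x) (hpw x)
      have c2 := re_ge_of_close (p x) (p (s₀ + τ)) hpxq
      have c3 := re_ge_of_close (p (s₀ + τ)) (w (s₀ + τ)) (ε := δ/8)
        (by rw [norm_sub_rev]; exact hpw _)
      have c4 := re_ge_of_close (w (s₀ + τ)) (w s₀) hwq
      linarith
  -- continuity and integrability
  have hwcont : Continuous w := ap_continuous hap
  have hwre : Continuous fun x => (w x).re := Complex.continuous_re.comp hwcont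
  have hintre : ∀ a b : Fin n → ℝ, IntegrableOn (fun x => (w x).re) (Set.Icc a b) :=
    fun a b => hwre.continuousOn.integrableOn_compact isCompact_Icc
  have hintw : ∀ a b : Fin n → ℝ, IntegrableOn w (Set.Icc a b) :=
    fun a b => hwcont.continuousOn.integrableOn_compact isCompact_Icc
  -- counting lower bound
  have count : ∀ m : ℕ, 1 ≤ m →
      (δ/4) * (2*r)^n * (m:ℝ)^n
        ≤ ∫ x in Set.Icc (0 : Fin n → ℝ) (fun _ => 2*L'*(m:ℝ)), (w x).re := by
    intro m hm
    set tc : (Fin n → Fin m) → (Fin n → ℝ) := fun k i => 2*L'*((k i : ℕ):ℝ) + L' with htc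
    choose q hq1 hq2 using fun k : Fin n → Fin m => key (tc k)
    set box : (Fin n → Fin m) → Set (Fin n → ℝ) :=
      fun k => Set.Icc (fun i => q k i - r) (fun i => q k i + r) with hboxdef
    have hqt : ∀ k i, 2*L'*((k i : ℕ):ℝ) + L' - L ≤ q k i ∧
        q k i ≤ 2*L'*((k i : ℕ):ℝ) + L' + L := by
      intro k i
      have h2 := abs_le.mp (hq1 k i)
      have e : tc k i = 2*L'*((k i : ℕ):ℝ) + L' := rfl
      rw [e] at h2
      exact ⟨by linarith [h2.1], by linarith [h2.2]⟩
    have hbox_sub : ∀ k, box k ⊆ Set.Icc (0 : Fin n → ℝ) (fun _ => 2*L'*(m:ℝ)) := by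
      intro k x hx
      have h4 := norm_nonneg s₀
      constructor <;> intro i
      · have h1 : q k i - r ≤ x i := hx.1 i
        have h2 := (hqt k i).1
        have h3 : (0:ℝ) ≤ ((k i : ℕ):ℝ) := Nat.cast_nonneg _
        have h5 : 0 ≤ 2*L'*((k i : ℕ):ℝ) := mul_nonneg (by linarith [hL'0]) h3
        show (0:ℝ) ≤ x i
        rw [hL'def] at h2 h5
        linarith
      · have h1 : x i ≤ q k i + r := hx.2 i
        have h2 := (hqt k i).2
        have h3 : ((k i : ℕ):ℝ) + 1 ≤ (m:ℝ) := by
          exact_mod_cast Nat.succ_le_of_lt (k i).isLt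
        have h5 : 2*L'*(((k i : ℕ):ℝ) + 1) ≤ 2*L'*(m:ℝ) :=
          mul_le_mul_of_nonneg_left h3 (by linarith [hL'0])
        show x i ≤ 2*L'*(m:ℝ)
        rw [hL'def] at h2 h5 ⊢
        linarith
    have hdisj : Set.Pairwise (↑(Finset.univ : Finset (Fin n → Fin m)))
        (Function.onFun Disjoint box) := by
      have main : ∀ k k' : Fin n → Fin m, ∀ i, ((k i : ℕ):ℝ) + 1 ≤ ((k' i : ℕ):ℝ) →
          ∀ x, x ∈ box k → x ∉ box k' := by
        intro k k' i hlt x hxk hxk'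
        have a2 : x i ≤ q k i + r := hxk.2 i
        have b1 : q k' i - r ≤ x i := hxk'.1 i
        have c1 := (hqt k i).2
        have c2 := (hqt k' i).1
        have h4 := norm_nonneg s₀
        have h5 : 2*L'*(((k i : ℕ):ℝ) + 1) ≤ 2*L'*((k' i : ℕ):ℝ) :=
          mul_le_mul_of_nonneg_left hlt (by linarith [hL'0])
        rw [hL'def] at c1 c2 h5
        linarith
      intro k _ k' _ hkk'
      obtain ⟨i, hi⟩ := Function.ne_iff.mp hkk'
      have hne : (k i : ℕ) ≠ (k' i : ℕ) := fun h => hi (Fin.ext h)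
      rw [Function.onFun, Set.disjoint_left]
      intro x hxk hxk'
      rcases lt_or_gt_of_ne hne with h | h
      · have hlt : ((k i : ℕ):ℝ) + 1 ≤ ((k' i : ℕ):ℝ) := by exact_mod_cast h
        exact main k k' i hlt x hxk hxk'
      · have hlt : ((k' i : ℕ):ℝ) + 1 ≤ ((k i : ℕ):ℝ) := by exact_mod_cast h
        exact main k' k i hlt x hxk' hxk
    have hvol : ∀ k, (δ/4) * (2*r)^n ≤ ∫ x in box k, (w x).re := by
      intro k
      have hab : (fun i => q k i - r) ≤ (fun i => q k i + r) := fun i => by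
        simp; linarith [hr0.le]
      have hconst : ∫ _x in box k, (δ/4) ≤ ∫ x in box k, (w x).re := by
        refine setIntegral_mono_on ?_ (hintre _ _) measurableSet_Icc (fun x hx => hq2 k x hx)
        exact integrableOn_const isCompact_Icc.measure_lt_top.ne
      have hvoleq : ∫ _x in box k, (δ/4) = (2*r)^n * (δ/4) := by
        rw [setIntegral_const]
        rw [hboxdef]
        simp only [smul_eq_mul]
        rw [measureReal_def, Real.volume_Icc_pi_toReal hab]
        congr 1
        have he : ∀ i ∈ (Finset.univ : Finset (Fin n)),
            ((fun i => q k i + r) i - (fun i => q k i - r) i) = 2*r := fun i _ => by ring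
        rw [Finset.prod_congr rfl he, Finset.prod_const, Finset.card_univ, Fintype.card_fin]
      calc (δ/4) * (2*r)^n = (2*r)^n * (δ/4) := by ring
        _ = ∫ _x in box k, (δ/4) := hvoleq.symm
        _ ≤ ∫ x in box k, (w x).re := hconst
    calc (δ/4) * (2*r)^n * (m:ℝ)^n
        = ∑ _k : Fin n → Fin m, (δ/4) * (2*r)^n := by
          rw [Finset.sum_const, Finset.card_univ, Fintype.card_fun, Fintype.card_fin,
            Fintype.card_fin, nsmul_eq_mul]
          push_cast
          ring
      _ ≤ ∑ k : Fin n → Fin m, ∫ x in box k, (w x).re :=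
          Finset.sum_le_sum fun k _ => hvol k
      _ = ∫ x in ⋃ k ∈ (Finset.univ : Finset (Fin n → Fin m)), box k, (w x).re :=
          (integral_biUnion_finset _ (fun k _ => measurableSet_Icc) hdisj
            (fun k _ => hintre _ _)).symm
      _ ≤ ∫ x in Set.Icc (0 : Fin n → ℝ) (fun _ => 2*L'*(m:ℝ)), (w x).re := by
          refine setIntegral_mono_set (hintre _ _) ?_ ?_
          · exact Filter.Eventually.of_forall fun x => (hnn x).2
          · exact HasSubset.Subset.eventuallyLE
              (Set.iUnion₂_subset fun k _ => hbox_sub k)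
  -- the real-valued mean tends to 0
  have hre0 : Tendsto (fun T : ℝ =>
      ((T:ℝ)^n)⁻¹ * ∫ x in Set.Icc (0 : Fin n → ℝ) (fun _ => T), (w x).re)
      atTop (nhds 0) := by
    have h1 : Tendsto (fun T : ℝ =>
        (((T : ℂ) ^ n)⁻¹ * ∫ s in Set.Icc (0 : Fin n → ℝ) (fun _ => T), w s).re)
        atTop (nhds ((0:ℂ).re)) := (Complex.continuous_re.tendsto 0).comp hM
    simp only [Complex.zero_re] at h1
    refine h1.congr fun T => ?_
    have e1 : ((T:ℂ)^n)⁻¹ = (((T^n)⁻¹ : ℝ) : ℂ) := by push_cast; ring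
    rw [e1, Complex.re_ofReal_mul]
    congr 1
    rw [← RCLike.re_to_complex, ← integral_re (hintw _ _)]
    rfl
  -- conclusion
  have hc0 : 0 < (δ/4) * (2*r)^n / (2*L')^n :=
    div_pos (mul_pos (by linarith) (pow_pos (by linarith) n)) (pow_pos (by linarith) n)
  have hseq : Tendsto (fun m : ℕ =>
      ((2*L'*(m:ℝ))^n)⁻¹ * ∫ x in Set.Icc (0 : Fin n → ℝ) (fun _ => 2*L'*(m:ℝ)), (w x).re)
      atTop (nhds 0) := by
    refine hre0.comp ?_
    exact Tendsto.const_mul_atTop (by linarith) tendsto_natCast_atTop_atTop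
  have hlb : ∀ᶠ m : ℕ in atTop, (δ/4) * (2*r)^n / (2*L')^n ≤
      ((2*L'*(m:ℝ))^n)⁻¹ * ∫ x in Set.Icc (0 : Fin n → ℝ) (fun _ => 2*L'*(m:ℝ)), (w x).re := by
    filter_upwards [eventually_ge_atTop 1] with m hm
    have hm1 : (1:ℝ) ≤ (m:ℝ) := by exact_mod_cast hm
    have hT : (0:ℝ) < 2*L'*(m:ℝ) := by nlinarith
    have h1 := count m hm
    have h2 : ((2*L'*(m:ℝ))^n)⁻¹ * ((δ/4) * (2*r)^n * (m:ℝ)^n)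
        ≤ ((2*L'*(m:ℝ))^n)⁻¹ * ∫ x in Set.Icc (0 : Fin n → ℝ) (fun _ => 2*L'*(m:ℝ)), (w x).re :=
      mul_le_mul_of_nonneg_left h1 (inv_nonneg.mpr (pow_nonneg (by nlinarith) n))
    refine le_trans (le_of_eq ?_) h2
    have e1 : (2*L'*(m:ℝ))^n = (2*L')^n * (m:ℝ)^n := mul_pow _ _ n
    have hmn : ((m:ℝ)^n) ≠ 0 := by positivity
    have h2L : ((2*L')^n) ≠ 0 := ne_of_gt (pow_pos (by linarith) n)
    rw [e1, mul_inv]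
    field_simp
  have := ge_of_tendsto hseq hlb
  linarith
end

section
/- Suppose w : ℝⁿ → ℂ is almost periodic with w(ℝⁿ) ⊆ ℝ^{≥0}, and f : ℝ → ℝⁿ is measurable and uniformly distributed, meaning lim_{T→∞} (1/T) ∫₀^T e^{2πi(β·f(t))} dt = 0 for all nonzero β ∈ ℝⁿ. Then limsup_{t→+∞} w(f(t)) = 0 if and only if w = 0 identically. -/
open MeasureTheory Filter

/-- A bounded measurable `g : ℝ → ℂ` has *mean value* `M` if
`T⁻¹ ∫_0^T g(t) dt → M` as `T → ∞`. -/
def HasMeanValue1 (g : ℝ → ℂ) (M : ℂ) : Prop :=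
  Tendsto (fun T : ℝ => (T : ℂ)⁻¹ * ∫ t in Set.Ioc (0 : ℝ) T, g t) atTop (nhds M)

namespace S7
variable {n : ℕ}

/-- The character `s ↦ e^{i (α·s)}`. -/
noncomputable def chr (α s : Fin n → ℝ) : ℂ :=
  Complex.exp (Complex.I * ((∑ i, α i * s i : ℝ) : ℂ))

lemma chr_continuous (α : Fin n → ℝ) : Continuous (chr α) := by
  unfold chr
  exact Complex.continuous_exp.comp (continuous_const.mul
    (Complex.continuous_ofReal.comp
      (continuous_finset_sum _ fun i _ => continuous_const.mul (continuous_apply i))))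

lemma norm_exp_I_mul_sub_one_le (x : ℝ) : ‖Complex.exp (Complex.I * x) - 1‖ ≤ |x| := by
  have h : Complex.exp (Complex.I * x) - 1
      = ((Real.cos x - 1 : ℝ) : ℂ) + ((Real.sin x : ℝ) : ℂ) * Complex.I := by
    rw [mul_comm, Complex.exp_mul_I]
    push_cast; ring
  rw [h]
  have h2 : ‖((Real.cos x - 1 : ℝ) : ℂ) + ((Real.sin x : ℝ) : ℂ) * Complex.I‖
      = Real.sqrt ((Real.cos x - 1)^2 + (Real.sin x)^2) := by
    rw [Complex.norm_add_mul_I]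
  rw [h2]
  have h3 : (Real.cos x - 1)^2 + (Real.sin x)^2 = 2 - 2 * Real.cos x := by
    have := Real.sin_sq_add_cos_sq x
    nlinarith
  have h4 : 2 - 2 * Real.cos x ≤ x ^ 2 := by
    have := Real.one_sub_sq_div_two_le_cos (x := x)
    nlinarith
  calc Real.sqrt ((Real.cos x - 1)^2 + (Real.sin x)^2) ≤ Real.sqrt (x^2) := by
        rw [h3]; exact Real.sqrt_le_sqrt h4
    _ = |x| := Real.sqrt_sq_eq_abs x

lemma norm_chr (α s : Fin n → ℝ) : ‖chr α s‖ = 1 := by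
  simp [chr, Complex.norm_exp]

lemma chr_add (α s t : Fin n → ℝ) : chr α (s + t) = chr α s * chr α t := by
  rw [chr, chr, chr, ← Complex.exp_add]
  congr 1
  have : ∑ i, α i * (s + t) i = (∑ i, α i * s i) + ∑ i, α i * t i := by
    rw [← Finset.sum_add_distrib]
    exact Finset.sum_congr rfl fun i _ => by simp [mul_add]
  rw [this]; push_cast; ring

lemma chr_sub_one (α s t : Fin n → ℝ) :
    ‖chr α (s - t) - 1‖ = ‖chr α s - chr α t‖ := by
  have h : chr α s = chr α (s - t) * chr α t := by
    rw [← chr_add]; congr 1; abel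
  calc ‖chr α (s - t) - 1‖ = ‖(chr α (s - t) - 1) * chr α t‖ := by
        rw [norm_mul, norm_chr, mul_one]
    _ = ‖chr α s - chr α t‖ := by rw [sub_mul, one_mul, ← h]

/-! ### Relative density of Bohr sets -/

lemma bohr (A : Finset (Fin n → ℝ)) {η : ℝ} (hη : 0 < η) :
    ∃ R : ℝ, 0 < R ∧ ∀ x : Fin n → ℝ, ∃ τ : Fin n → ℝ, dist τ x ≤ R ∧
      ∀ α ∈ A, ‖chr α τ - 1‖ ≤ η := by
  classical
  set φ : (Fin n → ℝ) → (↥A → ℂ) := fun τ a => chr a.1 τ with hφ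
  have hsub : Set.range φ ⊆ Metric.closedBall 0 1 := by
    rintro _ ⟨τ, rfl⟩
    rw [Metric.mem_closedBall, dist_zero_right]
    refine pi_norm_le_iff_of_nonneg zero_le_one |>.2 fun a => ?_
    rw [norm_chr]
  have htb : TotallyBounded (Set.range φ) :=
    ((isCompact_closedBall (0 : ↥A → ℂ) 1).totallyBounded).subset hsub
  obtain ⟨t, hts, htf, hcov⟩ := totallyBounded_iff_subset.1 htb _
    (Metric.dist_mem_uniformity (half_pos hη))
  set g : (↥A → ℂ) → (Fin n → ℝ) :=
    fun y => if h : ∃ τ, φ τ = y then h.choose else 0 with hg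
  refine ⟨1 + ∑ y ∈ htf.toFinset, ‖g y‖, by positivity, fun x => ?_⟩
  have hx : φ x ∈ ⋃ y ∈ t, { z | dist z y < η / 2 } := hcov ⟨x, rfl⟩
  simp only [Set.mem_iUnion] at hx
  obtain ⟨y, hyt, hdy⟩ := hx
  have hy : ∃ τ, φ τ = y := hts hyt
  have hgy : φ (g y) = y := by rw [hg]; simp only [dif_pos hy]; exact hy.choose_spec
  refine ⟨x - g y, ?_, fun α hα => ?_⟩
  · have h1 : dist (x - g y) x = ‖g y‖ := by
      rw [dist_eq_norm]; simp
    rw [h1]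
    have h2 : ‖g y‖ ≤ ∑ y ∈ htf.toFinset, ‖g y‖ :=
      Finset.single_le_sum (fun z _ => norm_nonneg (g z)) (htf.mem_toFinset.2 hyt)
    linarith
  · rw [chr_sub_one]
    have h3 : dist (φ x ⟨α, hα⟩) (y ⟨α, hα⟩) ≤ dist (φ x) y := dist_le_pi_dist _ _ _
    have h4 : φ x ⟨α, hα⟩ = chr α x := rfl
    have h5 : y ⟨α, hα⟩ = chr α (g y) := (congrFun hgy ⟨α, hα⟩).symm
    calc ‖chr α x - chr α (g y)‖ = dist (φ x ⟨α, hα⟩) (y ⟨α, hα⟩) := by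
          rw [dist_eq_norm, h4, h5]
      _ ≤ dist (φ x) y := h3
      _ ≤ η := by rw [Set.mem_setOf_eq] at hdy; linarith

/-! ### Estimates for trigonometric polynomials -/

lemma poly_norm_le (A : Finset (Fin n → ℝ)) (c : (Fin n → ℝ) → ℂ) (s : Fin n → ℝ) :
    ‖∑ α ∈ A, c α * chr α s‖ ≤ ∑ α ∈ A, ‖c α‖ := by
  refine (norm_sum_le _ _).trans (Finset.sum_le_sum fun α _ => ?_)
  rw [norm_mul, norm_chr, mul_one]

lemma poly_lip (A : Finset (Fin n → ℝ)) (c : (Fin n → ℝ) → ℂ) (x y : Fin n → ℝ) :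
    ‖(∑ α ∈ A, c α * chr α y) - ∑ α ∈ A, c α * chr α x‖
      ≤ (∑ α ∈ A, ‖c α‖ * (∑ i, |α i|)) * dist y x := by
  rw [← Finset.sum_sub_distrib, Finset.sum_mul]
  refine (norm_sum_le _ _).trans (Finset.sum_le_sum fun α _ => ?_)
  rw [← mul_sub, norm_mul]
  have h : ‖chr α y - chr α x‖ ≤ (∑ i, |α i|) * dist y x := by
    rw [← chr_sub_one α y x, chr]
    refine (norm_exp_I_mul_sub_one_le _).trans ?_
    refine (Finset.abs_sum_le_sum_abs _ _).trans ?_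
    rw [Finset.sum_mul]
    refine Finset.sum_le_sum fun i _ => ?_
    rw [abs_mul]
    refine mul_le_mul_of_nonneg_left ?_ (abs_nonneg _)
    have hd := dist_le_pi_dist y x i
    rw [Real.dist_eq] at hd
    simpa [Pi.sub_apply] using hd
  calc ‖c α‖ * ‖chr α y - chr α x‖ ≤ ‖c α‖ * ((∑ i, |α i|) * dist y x) :=
        mul_le_mul_of_nonneg_left h (norm_nonneg _)
    _ = ‖c α‖ * (∑ i, |α i|) * dist y x := by ring

lemma poly_almost_period (A : Finset (Fin n → ℝ)) (c : (Fin n → ℝ) → ℂ) {τ : Fin n → ℝ}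
    {η : ℝ} (hτ : ∀ α ∈ A, ‖chr α τ - 1‖ ≤ η) (hη : 0 ≤ η) (s : Fin n → ℝ) :
    ‖(∑ α ∈ A, c α * chr α (s + τ)) - ∑ α ∈ A, c α * chr α s‖
      ≤ (∑ α ∈ A, ‖c α‖) * η := by
  rw [← Finset.sum_sub_distrib, Finset.sum_mul]
  refine (norm_sum_le _ _).trans (Finset.sum_le_sum fun α hα => ?_)
  have h : c α * chr α (s + τ) - c α * chr α s = c α * chr α s * (chr α τ - 1) := by
    rw [chr_add]; ring
  rw [h, norm_mul, norm_mul, norm_chr, mul_one]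
  exact mul_le_mul_of_nonneg_left (hτ α hα) (norm_nonneg _)

/-! ### Continuity of almost periodic functions -/

lemma ap_continuous {w : (Fin n → ℝ) → ℂ} (hap : AlmostPeriodic w) : Continuous w := by
  have h : ∀ k : ℕ, ∃ p, IsTrigPoly p ∧ ∀ s, ‖w s - p s‖ ≤ 1/((k:ℝ)+1) :=
    fun k => hap _ (by positivity)
  choose p hp1 hp2 using h
  have hcont : ∀ k, Continuous (p k) := by
    intro k
    obtain ⟨A, c, hA⟩ := hp1 k
    have hpk : p k = fun s => ∑ α ∈ A, c α * chr α s := funext fun s => hA s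
    rw [hpk]
    exact continuous_finset_sum _ fun α _ => continuous_const.mul (chr_continuous α)
  have htu : TendstoUniformly (fun k => p k) w atTop := by
    rw [Metric.tendstoUniformly_iff]
    intro ε hε
    obtain ⟨K, hK⟩ := exists_nat_one_div_lt hε
    filter_upwards [eventually_ge_atTop K] with k hk s
    have h1 : 1/((k:ℝ)+1) ≤ 1/((K:ℝ)+1) := by
      have h2 : ((K:ℝ)+1) ≤ ((k:ℝ)+1) := by
        have : (K:ℝ) ≤ (k:ℝ) := by exact_mod_cast hk
        linarith
      exact one_div_le_one_div_of_le (by positivity) h2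
    calc dist (w s) (p k s) = ‖w s - p k s‖ := dist_eq_norm _ _
      _ ≤ 1/((k:ℝ)+1) := hp2 k s
      _ ≤ 1/((K:ℝ)+1) := h1
      _ < ε := hK
  exact htu.continuous (Frequently.of_forall hcont)

/-! ### Mean values -/

lemma oneD_mean (a : ℝ) :
    Tendsto (fun T : ℝ => (T : ℂ)⁻¹ * ∫ u in Set.Ioc (0:ℝ) T,
        Complex.exp (Complex.I * ((a * u : ℝ) : ℂ)))
      atTop (nhds (if a = 0 then 1 else 0)) := by
  split_ifs with ha
  · subst ha
    refine Tendsto.congr' ?_ (tendsto_const_nhds (x := (1:ℂ)))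
    filter_upwards [eventually_gt_atTop (0:ℝ)] with T hT
    simp only [zero_mul, Complex.ofReal_zero, mul_zero, Complex.exp_zero]
    symm
    rw [setIntegral_const, Real.volume_real_Ioc_of_le hT.le, sub_zero,
      Complex.real_smul, mul_one, inv_mul_cancel₀]
    exact_mod_cast hT.ne'
  · have hIa : Complex.I * a ≠ 0 := by
      simp [Complex.I_ne_zero, Complex.ofReal_ne_zero, ha]
    set C : ℝ := 2 / ‖Complex.I * (a:ℂ)‖ with hC
    have hbound : ∀ T : ℝ, 0 ≤ T →
        ‖∫ u in Set.Ioc (0:ℝ) T, Complex.exp (Complex.I * ((a * u : ℝ) : ℂ))‖ ≤ C := by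
      intro T hT
      have h1 : ∀ u : ℝ, Complex.exp (Complex.I * ((a * u : ℝ) : ℂ))
          = Complex.exp ((Complex.I * a) * (u : ℂ)) := by
        intro u; push_cast; ring_nf
      have hexpnorm : ∀ x : ℂ, ‖Complex.exp (Complex.I * (a:ℂ) * x)‖ ≤ 1 ∨ True := fun _ => Or.inr trivial
      have hen : ∀ b : ℝ, ‖Complex.exp (Complex.I * (a:ℂ) * (b:ℂ))‖ = 1 := by
        intro b
        rw [Complex.norm_exp]
        simp [Complex.mul_re, Complex.mul_im]
      simp_rw [h1]
      rw [← intervalIntegral.integral_of_le hT, integral_exp_mul_complex hIa, norm_div]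
      calc ‖Complex.exp (Complex.I * a * T) - Complex.exp (Complex.I * a * 0)‖ / ‖Complex.I * (a:ℂ)‖
          ≤ (‖Complex.exp (Complex.I * (a:ℂ) * (T:ℂ))‖ + ‖Complex.exp (Complex.I * a * 0)‖) /
            ‖Complex.I * (a:ℂ)‖ := by gcongr; exact norm_sub_le _ _
        _ ≤ C := by
            rw [hen T, mul_zero, Complex.exp_zero, norm_one, hC]
            norm_num
    have hsq : ∀ᶠ T : ℝ in atTop,
        ‖(T:ℂ)⁻¹ * ∫ u in Set.Ioc (0:ℝ) T, Complex.exp (Complex.I * ((a * u : ℝ) : ℂ))‖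
          ≤ T⁻¹ * C := by
      filter_upwards [eventually_ge_atTop (0:ℝ)] with T hT
      rw [norm_mul, norm_inv, Complex.norm_real, Real.norm_eq_abs, _root_.abs_of_nonneg hT]
      have hCnn : 0 ≤ C := by rw [hC]; positivity
      gcongr
      exact hbound T hT
    refine squeeze_zero_norm' hsq ?_
    simpa using tendsto_inv_atTop_zero.mul_const C

def cube (n : ℕ) (T : ℝ) : Set (Fin n → ℝ) := Set.pi Set.univ (fun _ => Set.Ioc (0:ℝ) T)

lemma cube_measurable (T : ℝ) : MeasurableSet (cube n T) :=
  MeasurableSet.univ_pi fun _ => measurableSet_Ioc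

lemma integrableOn_cube {E : Type*} [NormedAddCommGroup E] {g : (Fin n → ℝ) → E}
    (hg : Continuous g) (T : ℝ) : IntegrableOn g (cube n T) := by
  refine IntegrableOn.mono_set
    (hg.continuousOn.integrableOn_compact
      (isCompact_univ_pi (s := fun _ => Set.Icc (0:ℝ) T) fun _ => isCompact_Icc)) ?_
  exact Set.pi_mono fun i _ => Set.Ioc_subset_Icc_self

lemma chr_eq_prod (α s : Fin n → ℝ) :
    chr α s = ∏ i, Complex.exp (Complex.I * ((α i * s i : ℝ) : ℂ)) := by
  rw [chr, ← Complex.exp_sum]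
  congr 1
  rw [Complex.ofReal_sum, Finset.mul_sum]

lemma integral_chr_cube (α : Fin n → ℝ) (T : ℝ) :
    ∫ s in cube n T, chr α s
      = ∏ i, ∫ u in Set.Ioc (0:ℝ) T, Complex.exp (Complex.I * ((α i * u : ℝ) : ℂ)) := by
  rw [← integral_indicator (cube_measurable T)]
  have h : (cube n T).indicator (chr α)
      = fun s => ∏ i, (Set.Ioc (0:ℝ) T).indicator
          (fun u => Complex.exp (Complex.I * ((α i * u : ℝ) : ℂ))) (s i) := by
    funext s
    by_cases hs : s ∈ cube n T
    · rw [Set.indicator_of_mem hs, chr_eq_prod]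
      refine Finset.prod_congr rfl fun i _ => ?_
      rw [Set.indicator_of_mem (hs i (Set.mem_univ i))]
    · rw [Set.indicator_of_notMem hs]
      have hs' : ∃ i, s i ∉ Set.Ioc (0:ℝ) T := by
        by_contra hc
        push_neg at hc
        exact hs fun i _ => hc i
      obtain ⟨i, hi⟩ := hs'
      symm
      refine Finset.prod_eq_zero (Finset.mem_univ i) ?_
      rw [Set.indicator_of_notMem hi]
  rw [h, MeasureTheory.integral_fintype_prod_volume_eq_prod
    (fun i u => (Set.Ioc (0:ℝ) T).indicator
      (fun v => Complex.exp (Complex.I * ((α i * v : ℝ) : ℂ))) u)]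
  exact Finset.prod_congr rfl fun i _ => (integral_indicator measurableSet_Ioc)

lemma char_cube_mean (α : Fin n → ℝ) :
    Tendsto (fun T : ℝ => ((T:ℂ)⁻¹)^n * ∫ s in cube n T, chr α s)
      atTop (nhds (if α = 0 then 1 else 0)) := by
  have hrw : ∀ T : ℝ, ((T:ℂ)⁻¹)^n * ∫ s in cube n T, chr α s
      = ∏ i : Fin n, ((T:ℂ)⁻¹ * ∫ u in Set.Ioc (0:ℝ) T,
          Complex.exp (Complex.I * ((α i * u : ℝ) : ℂ))) := by
    intro T
    rw [integral_chr_cube, Finset.prod_mul_distrib, Finset.prod_const, Finset.card_univ,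
      Fintype.card_fin]
  have h := tendsto_finset_prod (Finset.univ : Finset (Fin n))
    (fun i (_ : i ∈ Finset.univ) => oneD_mean (α i))
  have hlim : (∏ i : Fin n, if α i = 0 then (1:ℂ) else 0) = if α = 0 then 1 else 0 := by
    by_cases hα : α = 0
    · subst hα; simp
    · rw [if_neg hα]
      obtain ⟨i, hi⟩ := Function.ne_iff.1 hα
      exact Finset.prod_eq_zero (Finset.mem_univ i) (if_neg (by simpa using hi))
  rw [← hlim]
  exact Tendsto.congr (fun T => (hrw T).symm) h

lemma poly_cube_mean (A : Finset (Fin n → ℝ)) (c : (Fin n → ℝ) → ℂ) :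
    Tendsto (fun T : ℝ => ((T:ℂ)⁻¹)^n * ∫ s in cube n T, ∑ α ∈ A, c α * chr α s)
      atTop (nhds (∑ α ∈ A, if α = 0 then c α else 0)) := by
  have hrw : ∀ T : ℝ, ((T:ℂ)⁻¹)^n * ∫ s in cube n T, (∑ α ∈ A, c α * chr α s)
      = ∑ α ∈ A, c α * (((T:ℂ)⁻¹)^n * ∫ s in cube n T, chr α s) := by
    intro T
    rw [integral_finset_sum _ fun α _ => (integrableOn_cube (chr_continuous α) T).const_mul (c α),
      Finset.mul_sum]
    refine Finset.sum_congr rfl fun α _ => ?_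
    rw [integral_const_mul]; ring
  have hlim : (∑ α ∈ A, if α = 0 then c α else 0)
      = ∑ α ∈ A, c α * (if α = 0 then (1:ℂ) else 0) := by
    refine Finset.sum_congr rfl fun α _ => by split_ifs <;> simp
  rw [hlim]
  exact Tendsto.congr (fun T => (hrw T).symm)
    (tendsto_finset_sum _ fun α _ => (char_cube_mean α).const_mul (c α))

lemma integrableOn_Ioc_bounded {g : ℝ → ℂ} (hm : Measurable g) {C : ℝ}
    (hC : ∀ t, ‖g t‖ ≤ C) (a b : ℝ) : IntegrableOn g (Set.Ioc a b) := by
  refine Integrable.mono' (g := fun _ => C) ?_ hm.aestronglyMeasurable (ae_of_all _ hC)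
  exact integrableOn_const measure_Ioc_lt_top.ne

lemma integrableOn_Ioc_bounded_real {g : ℝ → ℝ} (hm : Measurable g) {C : ℝ}
    (hC : ∀ t, ‖g t‖ ≤ C) (a b : ℝ) : IntegrableOn g (Set.Ioc a b) := by
  refine Integrable.mono' (g := fun _ => C) ?_ hm.aestronglyMeasurable (ae_of_all _ hC)
  exact integrableOn_const measure_Ioc_lt_top.ne

lemma char_f_mean (f : ℝ → Fin n → ℝ)
    (hud : ∀ β : Fin n → ℝ, β ≠ 0 →
      Tendsto (fun T : ℝ => (T : ℂ)⁻¹ * ∫ t in Set.Ioc (0:ℝ) T,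
          Complex.exp (2 * (Real.pi : ℂ) * Complex.I * ((∑ i, β i * f t i : ℝ) : ℂ)))
        atTop (nhds 0))
    (α : Fin n → ℝ) :
    Tendsto (fun T : ℝ => (T:ℂ)⁻¹ * ∫ t in Set.Ioc (0:ℝ) T, chr α (f t)) atTop
      (nhds (if α = 0 then 1 else 0)) := by
  split_ifs with hα
  · subst hα
    refine Tendsto.congr' ?_ (tendsto_const_nhds (x := (1:ℂ)))
    filter_upwards [eventually_gt_atTop (0:ℝ)] with T hT
    have h1 : ∀ t : ℝ, chr (0 : Fin n → ℝ) (f t) = 1 := by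
      intro t; simp [chr]
    simp_rw [h1]
    symm
    rw [setIntegral_const, Real.volume_real_Ioc_of_le hT.le, sub_zero,
      Complex.real_smul, mul_one, inv_mul_cancel₀]
    exact_mod_cast hT.ne'
  · set β := (2 * Real.pi)⁻¹ • α with hβdef
    have hβ : β ≠ 0 := by
      refine smul_ne_zero (inv_ne_zero ?_) hα
      positivity
    have h := hud β hβ
    refine Tendsto.congr (fun T => ?_) h
    congr 1
    refine setIntegral_congr_fun measurableSet_Ioc fun t _ => ?_
    have h2 : (∑ i, β i * f t i) = (2 * Real.pi)⁻¹ * ∑ i, α i * f t i := by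
      rw [Finset.mul_sum]
      exact Finset.sum_congr rfl fun i _ => by rw [hβdef]; simp [mul_assoc]
    rw [h2, chr]
    congr 1
    have hπ : ((2 * Real.pi : ℝ) : ℂ) ≠ 0 := by
      simp [Real.pi_ne_zero]
    push_cast
    push_cast at hπ
    field_simp

lemma poly_f_mean (f : ℝ → Fin n → ℝ) (hf : Measurable f)
    (hud : ∀ β : Fin n → ℝ, β ≠ 0 →
      Tendsto (fun T : ℝ => (T : ℂ)⁻¹ * ∫ t in Set.Ioc (0:ℝ) T,
          Complex.exp (2 * (Real.pi : ℂ) * Complex.I * ((∑ i, β i * f t i : ℝ) : ℂ)))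
        atTop (nhds 0))
    (A : Finset (Fin n → ℝ)) (c : (Fin n → ℝ) → ℂ) :
    Tendsto (fun T : ℝ => (T:ℂ)⁻¹ * ∫ t in Set.Ioc (0:ℝ) T, ∑ α ∈ A, c α * chr α (f t))
      atTop (nhds (∑ α ∈ A, if α = 0 then c α else 0)) := by
  have hint : ∀ (α : Fin n → ℝ) (T : ℝ),
      IntegrableOn (fun t => c α * chr α (f t)) (Set.Ioc (0:ℝ) T) := by
    intro α T
    refine (integrableOn_Ioc_bounded (((chr_continuous α).measurable).comp hf)
      (C := 1) (fun t => le_of_eq (norm_chr α (f t))) 0 T).const_mul (c α)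
  have hrw : ∀ T : ℝ, (T:ℂ)⁻¹ * ∫ t in Set.Ioc (0:ℝ) T, (∑ α ∈ A, c α * chr α (f t))
      = ∑ α ∈ A, c α * ((T:ℂ)⁻¹ * ∫ t in Set.Ioc (0:ℝ) T, chr α (f t)) := by
    intro T
    rw [integral_finset_sum _ fun α _ => hint α T, Finset.mul_sum]
    refine Finset.sum_congr rfl fun α _ => ?_
    rw [integral_const_mul]; ring
  have hlim : (∑ α ∈ A, if α = 0 then c α else 0)
      = ∑ α ∈ A, c α * (if α = 0 then (1:ℂ) else 0) := by
    refine Finset.sum_congr rfl fun α _ => by split_ifs <;> simp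
  rw [hlim]
  exact Tendsto.congr (fun T => (hrw T).symm)
    (tendsto_finset_sum _ fun α _ => (char_f_mean f hud α).const_mul (c α))

lemma grid_lower_bound {v : (Fin n → ℝ) → ℂ} (hv : Continuous v)
    (hvnn : ∀ s, 0 ≤ (v s).re)
    {c4 δ R : ℝ} (hc4 : 0 < c4) (hδ : 0 < δ) (hR : 0 < R)
    (hball : ∀ x : Fin n → ℝ, ∃ z : Fin n → ℝ, dist z x ≤ R ∧
      ∀ y, dist y z ≤ δ → c4 ≤ (v y).re) :
    ∀ᶠ T : ℝ in atTop,
      c4 * (δ / (2*(R+δ)))^n ≤ (T⁻¹)^n * ∫ s in cube n T, (v s).re := by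
  set L : ℝ := 2*(R+δ) with hLdef
  have hL : 0 < L := by positivity
  filter_upwards [eventually_ge_atTop (2*L)] with T hT
  have hT0 : 0 < T := lt_of_lt_of_le (by positivity) hT
  set m : ℕ := ⌊T / L⌋₊ with hmdef
  have hm1 : 1 ≤ m := by
    rw [hmdef]
    refine Nat.le_floor ?_
    push_cast
    rw [le_div_iff₀ hL]
    linarith
  have hmL : (m:ℝ) * L ≤ T := by
    have := Nat.floor_le (div_nonneg hT0.le hL.le)
    rw [← hmdef] at this
    calc (m:ℝ) * L ≤ (T / L) * L := by gcongr
      _ = T := by field_simp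
  have hTm : T < 2 * ((m:ℝ) * L) := by
    have h1 : T / L < (m:ℝ) + 1 := Nat.lt_floor_add_one _
    have h2 : (m:ℝ) + 1 ≤ 2 * m := by
      have : (1:ℝ) ≤ m := by exact_mod_cast hm1
      linarith
    have h3 : T / L < 2 * m := lt_of_lt_of_le h1 h2
    calc T = (T / L) * L := by field_simp
      _ < (2 * m) * L := by gcongr
      _ = 2 * ((m:ℝ) * L) := by ring
  -- choose ball centers
  choose z hz1 hz2 using fun k : Fin n → Fin m => hball (fun i => (k i : ℝ) * L + L/2)
  set B : (Fin n → Fin m) → Set (Fin n → ℝ) :=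
    fun k => Set.pi Set.univ fun i => Set.Ioc (z k i - δ) (z k i + δ) with hBdef
  have hzc : ∀ (k : Fin n → Fin m) (i : Fin n), |z k i - ((k i : ℝ)*L + L/2)| ≤ R := by
    intro k i
    have h := dist_le_pi_dist (z k) (fun i => (k i : ℝ) * L + L/2) i
    rw [Real.dist_eq] at h
    exact h.trans (hz1 k)
  have hBQ : ∀ (k : Fin n → Fin m) (y : Fin n → ℝ), y ∈ B k →
      ∀ i, (k i : ℝ) * L < y i ∧ y i ≤ (k i : ℝ) * L + L := by
    intro k y hy i
    have hyi := hy i (Set.mem_univ i)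
    obtain ⟨hyi1, hyi2⟩ := hyi
    have habs := abs_le.1 (hzc k i)
    constructor
    · have : z k i - δ ≥ (k i : ℝ) * L := by
        rw [hLdef] at *
        cases habs with
        | intro h1 h2 => linarith
      linarith
    · have : z k i + δ ≤ (k i : ℝ) * L + L := by
        rw [hLdef] at *
        cases habs with
        | intro h1 h2 => linarith
      linarith
  have hBsub : ∀ k, B k ⊆ cube n T := by
    intro k y hy i _
    obtain ⟨h1, h2⟩ := hBQ k y hy i
    have hki : (k i : ℝ) ≤ (m : ℝ) - 1 := by
      have : (k i : ℕ) < m := (k i).2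
      have : ((k i : ℕ) : ℝ) ≤ (m : ℝ) - 1 := by
        push_cast
        exact_mod_cast Nat.le_sub_one_of_lt this
      exact this
    constructor
    · have : (0:ℝ) ≤ (k i : ℝ) * L := by positivity
      linarith
    · calc y i ≤ (k i : ℝ) * L + L := h2
        _ ≤ ((m:ℝ) - 1) * L + L := by gcongr
        _ = (m:ℝ) * L := by ring
        _ ≤ T := hmL
  have hBval : ∀ k, ∀ y ∈ B k, c4 ≤ (v y).re := by
    intro k y hy
    refine hz2 k y ?_
    refine (dist_pi_le_iff hδ.le).2 fun i => ?_
    have hyi := hy i (Set.mem_univ i)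
    rw [Real.dist_eq, abs_le]
    exact ⟨by linarith [hyi.1], by linarith [hyi.2]⟩
  have hBmeas : ∀ k, MeasurableSet (B k) :=
    fun k => MeasurableSet.univ_pi fun i => measurableSet_Ioc
  have hBdisj : ∀ k ∈ (Finset.univ : Finset (Fin n → Fin m)),
      ∀ k' ∈ (Finset.univ : Finset (Fin n → Fin m)), k ≠ k' →
      Disjoint (B k) (B k') := by
    intro k _ k' _ hkk'
    obtain ⟨i, hi⟩ := Function.ne_iff.1 hkk'
    rw [Set.disjoint_left]
    intro y hy hy'
    obtain ⟨h1, h2⟩ := hBQ k y hy i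
    obtain ⟨h1', h2'⟩ := hBQ k' y hy' i
    rcases lt_or_gt_of_ne (fun h : (k i : ℕ) = (k' i : ℕ) => hi (Fin.ext h)) with h | h
    · have : ((k i : ℕ) : ℝ) + 1 ≤ ((k' i : ℕ) : ℝ) := by exact_mod_cast h
      nlinarith
    · have : ((k' i : ℕ) : ℝ) + 1 ≤ ((k i : ℕ) : ℝ) := by exact_mod_cast h
      nlinarith
  have hvol : ∀ k, (volume (B k)).toReal = (2*δ)^n := by
    intro k
    rw [hBdef]
    rw [volume_pi_pi]
    have : ∀ i : Fin n, volume (Set.Ioc (z k i - δ) (z k i + δ)) = ENNReal.ofReal (2*δ) := by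
      intro i; rw [Real.volume_Ioc]; congr 1; ring
    simp_rw [this]
    rw [Finset.prod_const, Finset.card_univ, Fintype.card_fin, ← ENNReal.ofReal_pow (by positivity)]
    rw [ENNReal.toReal_ofReal (by positivity)]
  have hvInt : IntegrableOn (fun s => (v s).re) (cube n T) :=
    integrableOn_cube (Complex.continuous_re.comp hv) T
  have hstep1 : ∫ s in (⋃ k ∈ (Finset.univ : Finset (Fin n → Fin m)), B k), (v s).re
      ≤ ∫ s in cube n T, (v s).re := by
    refine setIntegral_mono_set hvInt (ae_of_all _ fun s => hvnn s) ?_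
    exact HasSubset.Subset.eventuallyLE (Set.iUnion₂_subset fun k _ => hBsub k)
  have hstep2 : ∫ s in (⋃ k ∈ (Finset.univ : Finset (Fin n → Fin m)), B k), (v s).re
      = ∑ k : Fin n → Fin m, ∫ s in B k, (v s).re := by
    refine integral_biUnion_finset Finset.univ (fun k _ => hBmeas k) hBdisj ?_
    exact fun k _ => (hvInt.mono_set (hBsub k))
  have hstep3 : ∀ k : Fin n → Fin m, c4 * (2*δ)^n ≤ ∫ s in B k, (v s).re := by
    intro k
    have h := setIntegral_mono_on (integrableOn_const (LT.lt.ne ?_))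
      (hvInt.mono_set (hBsub k)) (hBmeas k) (fun y hy => hBval k y hy)
    · rw [setIntegral_const, measureReal_def, hvol k, smul_eq_mul, mul_comm] at h
      exact h
    · calc volume (B k) ≤ volume (cube n T) := measure_mono (hBsub k)
        _ < ⊤ := by
            rw [cube, volume_pi_pi]
            refine ENNReal.prod_lt_top fun i _ => ?_
            rw [Real.volume_Ioc]
            exact ENNReal.ofReal_lt_top
  have hsum : (m:ℝ)^n * (c4 * (2*δ)^n) ≤ ∫ s in cube n T, (v s).re := by
    calc (m:ℝ)^n * (c4 * (2*δ)^n)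
        = ∑ _k : Fin n → Fin m, c4 * (2*δ)^n := by
          rw [Finset.sum_const, Finset.card_univ,
            show Fintype.card (Fin n → Fin m) = m^n by simp [Fintype.card_pi],
            nsmul_eq_mul]
          push_cast
          ring
      _ ≤ ∑ k : Fin n → Fin m, ∫ s in B k, (v s).re := Finset.sum_le_sum fun k _ => hstep3 k
      _ = _ := hstep2.symm
      _ ≤ _ := hstep1
  have hfinal : c4 * (δ / L)^n ≤ (T⁻¹)^n * ((m:ℝ)^n * (c4 * (2*δ)^n)) := by
    have h1 : (δ / L) ≤ T⁻¹ * ((m:ℝ) * (2*δ)) := by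
      have h0 : δ / L * T ≤ (m:ℝ) * (2*δ) := by
        rw [div_mul_eq_mul_div, div_le_iff₀ hL]
        nlinarith
      calc δ / L = (δ / L * T) * T⁻¹ := by field_simp
        _ ≤ ((m:ℝ) * (2*δ)) * T⁻¹ := by gcongr
        _ = T⁻¹ * ((m:ℝ) * (2*δ)) := by ring
    calc c4 * (δ / L)^n ≤ c4 * (T⁻¹ * ((m:ℝ) * (2*δ)))^n := by
          gcongr
      _ = (T⁻¹)^n * ((m:ℝ)^n * (c4 * (2*δ)^n)) := by rw [mul_pow, mul_pow]; ring
  calc c4 * (δ / L)^n ≤ (T⁻¹)^n * ((m:ℝ)^n * (c4 * (2*δ)^n)) := hfinal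
    _ ≤ (T⁻¹)^n * ∫ s in cube n T, (v s).re := by
        gcongr


end S7

/-- If `w : ℝⁿ → ℂ` is almost periodic with values in `ℝ^{≥0}` and `f : ℝ → ℝⁿ` is
measurable and uniformly distributed, then `limsup_{t→∞} w(f(t)) = 0` iff `w = 0`. -/
theorem stmt7 {n : ℕ} (hn : 1 ≤ n) (w : (Fin n → ℝ) → ℂ)
    (hap : AlmostPeriodic w)
    (hnn : ∀ s, (w s).im = 0 ∧ 0 ≤ (w s).re)
    (f : ℝ → Fin n → ℝ) (hf : Measurable f)
    (hud : ∀ β : Fin n → ℝ, β ≠ 0 →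
      HasMeanValue1
        (fun t => Complex.exp (2 * (↑Real.pi : ℂ) * Complex.I *
          (↑(∑ i, β i * f t i) : ℂ))) 0) :
    Filter.limsup (fun t => (w (f t)).re) Filter.atTop = 0 ↔ ∀ s, w s = 0 := by
  classical
  constructor
  · intro hls
    by_contra hcon
    push_neg at hcon
    obtain ⟨s₀, hs₀⟩ := hcon
    have hc0 : 0 < (w s₀).re := by
      rcases lt_or_eq_of_le (hnn s₀).2 with h | h
      · exact h
      · exact absurd (Complex.ext (by simp [← h]) (by simp [(hnn s₀).1])) hs₀
    set c : ℝ := (w s₀).re with hcdef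
    obtain ⟨p₁, hp₁t, hp₁⟩ := hap (c/8) (by positivity)
    obtain ⟨A₁, c₁, hA₁⟩ := hp₁t
    have hA₁' : ∀ s, p₁ s = ∑ α ∈ A₁, c₁ α * S7.chr α s := fun s => hA₁ s
    have hp₁' : ∀ s, ‖w s - ∑ α ∈ A₁, c₁ α * S7.chr α s‖ ≤ c/8 := fun s => hA₁' s ▸ hp₁ s
    set C₁ : ℝ := ∑ α ∈ A₁, ‖c₁ α‖ with hC₁def
    have hC₁nn : 0 ≤ C₁ := Finset.sum_nonneg fun α _ => norm_nonneg _
    have hη0 : 0 < (c/8) / (1 + C₁) := by positivity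
    obtain ⟨R, hR0, hRd⟩ := S7.bohr A₁ hη0
    set K : ℝ := ∑ α ∈ A₁, ‖c₁ α‖ * (∑ i, |α i|) with hKdef
    have hKnn : 0 ≤ K := Finset.sum_nonneg fun α _ =>
      mul_nonneg (norm_nonneg _) (Finset.sum_nonneg fun i _ => abs_nonneg _)
    set δ : ℝ := (c/8) / (1 + K) with hδdef
    have hδ0 : 0 < δ := by positivity
    -- every ball of radius R contains a δ-ball on which `Re w ≥ c/2`
    have hball : ∀ x : Fin n → ℝ, ∃ z, dist z x ≤ R ∧
        ∀ y, dist y z ≤ δ → c/2 ≤ (w y).re := by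
      intro x
      obtain ⟨τ, hτd, hτa⟩ := hRd (x - s₀)
      refine ⟨s₀ + τ, ?_, fun y hy => ?_⟩
      · have hd : dist (s₀ + τ) x = dist τ (x - s₀) := by
          rw [dist_eq_norm, dist_eq_norm]
          congr 1
          abel
        rw [hd]; exact hτd
      · have a1 : ‖(∑ α ∈ A₁, c₁ α * S7.chr α (s₀ + τ)) - ∑ α ∈ A₁, c₁ α * S7.chr α s₀‖
            ≤ C₁ * ((c/8) / (1 + C₁)) := S7.poly_almost_period A₁ c₁ hτa hη0.le s₀
        have a2 : ‖(∑ α ∈ A₁, c₁ α * S7.chr α y) - ∑ α ∈ A₁, c₁ α * S7.chr α (s₀ + τ)‖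
            ≤ K * δ := by
          refine (S7.poly_lip A₁ c₁ (s₀ + τ) y).trans ?_
          exact mul_le_mul_of_nonneg_left hy hKnn
        have b1 : C₁ * ((c/8) / (1 + C₁)) ≤ c/8 := by
          calc C₁ * ((c/8) / (1 + C₁)) ≤ (1 + C₁) * ((c/8) / (1 + C₁)) :=
                mul_le_mul_of_nonneg_right (by linarith) hη0.le
            _ = c/8 := by field_simp
        have b2 : K * δ ≤ c/8 := by
          calc K * δ ≤ (1 + K) * δ := mul_le_mul_of_nonneg_right (by linarith) hδ0.le
            _ = c/8 := by rw [hδdef]; field_simp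
        have e1 : ‖w y - w s₀‖ ≤ c/2 := by
          have d1 := hp₁' y
          have d2 := hp₁' s₀
          have d3 : ‖(∑ α ∈ A₁, c₁ α * S7.chr α s₀) - w s₀‖
              = ‖w s₀ - ∑ α ∈ A₁, c₁ α * S7.chr α s₀‖ := norm_sub_rev _ _
          have key : w y - w s₀ = (w y - ∑ α ∈ A₁, c₁ α * S7.chr α y)
              + (((∑ α ∈ A₁, c₁ α * S7.chr α y) - ∑ α ∈ A₁, c₁ α * S7.chr α (s₀ + τ))
              + (((∑ α ∈ A₁, c₁ α * S7.chr α (s₀ + τ)) - ∑ α ∈ A₁, c₁ α * S7.chr α s₀)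
              + ((∑ α ∈ A₁, c₁ α * S7.chr α s₀) - w s₀))) := by abel
          rw [key]
          have n1 := norm_add_le (w y - ∑ α ∈ A₁, c₁ α * S7.chr α y)
            (((∑ α ∈ A₁, c₁ α * S7.chr α y) - ∑ α ∈ A₁, c₁ α * S7.chr α (s₀ + τ))
              + (((∑ α ∈ A₁, c₁ α * S7.chr α (s₀ + τ)) - ∑ α ∈ A₁, c₁ α * S7.chr α s₀)
              + ((∑ α ∈ A₁, c₁ α * S7.chr α s₀) - w s₀)))
          have n2 := norm_add_le ((∑ α ∈ A₁, c₁ α * S7.chr α y) - ∑ α ∈ A₁, c₁ α * S7.chr α (s₀ + τ))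
            (((∑ α ∈ A₁, c₁ α * S7.chr α (s₀ + τ)) - ∑ α ∈ A₁, c₁ α * S7.chr α s₀)
              + ((∑ α ∈ A₁, c₁ α * S7.chr α s₀) - w s₀))
          have n3 := norm_add_le ((∑ α ∈ A₁, c₁ α * S7.chr α (s₀ + τ)) - ∑ α ∈ A₁, c₁ α * S7.chr α s₀)
            ((∑ α ∈ A₁, c₁ α * S7.chr α s₀) - w s₀)
          rw [d3] at n3
          linarith
        have e2 : |(w y).re - (w s₀).re| ≤ ‖w y - w s₀‖ := by
          have h2 := Complex.abs_re_le_norm (w y - w s₀)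
          rw [Complex.sub_re] at h2
          exact h2
        have e3 := abs_le.1 e2
        have := e3.1
        rw [← hcdef] at *
        linarith
    have hcont : Continuous w := S7.ap_continuous hap
    have hgrid := S7.grid_lower_bound hcont (fun s => (hnn s).2)
      (by positivity : (0:ℝ) < c/2) hδ0 hR0 hball
    set κ : ℝ := (c/2) * (δ / (2*(R+δ)))^n with hκdef
    have hκ0 : 0 < κ := by positivity
    obtain ⟨p₂, hp₂t, hp₂⟩ := hap (κ/8) (by positivity)
    obtain ⟨A₂, c₂, hA₂⟩ := hp₂t
    have hA₂' : ∀ s, p₂ s = ∑ α ∈ A₂, c₂ α * S7.chr α s := fun s => hA₂ s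
    have hp₂' : ∀ s, ‖w s - ∑ α ∈ A₂, c₂ α * S7.chr α s‖ ≤ κ/8 := fun s => hA₂' s ▸ hp₂ s
    have hpoint : ∀ s : Fin n → ℝ,
        |(w s).re - (∑ α ∈ A₂, c₂ α * S7.chr α s).re| ≤ κ/8 := by
      intro s
      have h2 := Complex.abs_re_le_norm (w s - ∑ α ∈ A₂, c₂ α * S7.chr α s)
      rw [Complex.sub_re] at h2
      exact h2.trans (hp₂' s)
    set c₀ : ℂ := ∑ α ∈ A₂, if α = 0 then c₂ α else 0 with hc₀def
    have hsumcont : Continuous (fun s => ∑ α ∈ A₂, c₂ α * S7.chr α s) :=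
      continuous_finset_sum _ fun α _ => continuous_const.mul (S7.chr_continuous α)
    -- ===== lower bound for c₀.re via the cube mean =====
    have hcube := S7.poly_cube_mean A₂ c₂
    have hcubere : Tendsto
        (fun T : ℝ => (((T:ℂ)⁻¹)^n * ∫ s in S7.cube n T, ∑ α ∈ A₂, c₂ α * S7.chr α s).re)
        atTop (nhds c₀.re) := (Complex.continuous_re.tendsto c₀).comp hcube
    have hlow : ∀ᶠ T : ℝ in atTop, κ - κ/8 ≤
        (((T:ℂ)⁻¹)^n * ∫ s in S7.cube n T, ∑ α ∈ A₂, c₂ α * S7.chr α s).re := by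
      filter_upwards [hgrid, eventually_gt_atTop (0:ℝ)] with T hgT hT0
      have hintp : IntegrableOn (fun s => ∑ α ∈ A₂, c₂ α * S7.chr α s) (S7.cube n T) :=
        S7.integrableOn_cube hsumcont T
      have hintw : IntegrableOn (fun s => (w s).re) (S7.cube n T) :=
        S7.integrableOn_cube (Complex.continuous_re.comp hcont) T
      have hvolfin : volume (S7.cube n T) < ⊤ := by
        rw [S7.cube, volume_pi_pi]
        refine ENNReal.prod_lt_top fun i _ => ?_
        rw [Real.volume_Ioc]
        exact ENNReal.ofReal_lt_top
      have hre1 : (((T:ℂ)⁻¹)^n * ∫ s in S7.cube n T, ∑ α ∈ A₂, c₂ α * S7.chr α s).re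
          = (T⁻¹)^n * ∫ s in S7.cube n T, (∑ α ∈ A₂, c₂ α * S7.chr α s).re := by
        have hcast : ((T:ℂ)⁻¹)^n = (((T⁻¹)^n : ℝ) : ℂ) := by push_cast; ring
        rw [hcast, Complex.re_ofReal_mul]
        congr 1
        simp only [← RCLike.re_to_complex]
        exact (integral_re hintp).symm
      rw [hre1]
      have hpt : ∀ s ∈ S7.cube n T, (w s).re - κ/8 ≤ (∑ α ∈ A₂, c₂ α * S7.chr α s).re :=
        fun s _ => by linarith [(abs_le.1 (hpoint s)).2]
      have hvolcube : (volume (S7.cube n T)).toReal = T^n := by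
        rw [S7.cube, volume_pi_pi]
        simp_rw [Real.volume_Ioc, sub_zero]
        rw [Finset.prod_const, Finset.card_univ, Fintype.card_fin,
          ← ENNReal.ofReal_pow hT0.le, ENNReal.toReal_ofReal (by positivity)]
      have hint2 : ∫ s in S7.cube n T, ((w s).re - κ/8)
          ≤ ∫ s in S7.cube n T, (∑ α ∈ A₂, c₂ α * S7.chr α s).re := by
        refine setIntegral_mono_on ?_ ?_ (S7.cube_measurable T) hpt
        · exact hintw.sub (integrableOn_const hvolfin.ne)
        · exact S7.integrableOn_cube (Complex.continuous_re.comp hsumcont) T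
      have hsplit : ∫ s in S7.cube n T, ((w s).re - κ/8)
          = (∫ s in S7.cube n T, (w s).re) - κ/8 * T^n := by
        rw [integral_sub hintw (integrableOn_const hvolfin.ne), setIntegral_const, measureReal_def,
          hvolcube, smul_eq_mul]
        ring
      have hTn : (T⁻¹)^n * T^n = 1 := by
        rw [← mul_pow, inv_mul_cancel₀ hT0.ne', one_pow]
      have hTinn : (0:ℝ) ≤ (T⁻¹)^n := by positivity
      calc κ - κ/8 ≤ (T⁻¹)^n * (∫ s in S7.cube n T, (w s).re) - κ/8 := by linarith
        _ = (T⁻¹)^n * ((∫ s in S7.cube n T, (w s).re) - κ/8 * T^n) := by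
            linear_combination (κ/8) * hTn
        _ = (T⁻¹)^n * ∫ s in S7.cube n T, ((w s).re - κ/8) := by rw [hsplit]
        _ ≤ (T⁻¹)^n * ∫ s in S7.cube n T, (∑ α ∈ A₂, c₂ α * S7.chr α s).re :=
            mul_le_mul_of_nonneg_left hint2 hTinn
    have hc₀low : κ - κ/8 ≤ c₀.re :=
      le_of_tendsto_of_tendsto tendsto_const_nhds hcubere hlow
    -- ===== upper bound for c₀.re via the mean along f =====
    have hfm := S7.poly_f_mean f hf (fun β hβ => hud β hβ) A₂ c₂
    have hfmre : Tendsto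
        (fun T : ℝ => ((T:ℂ)⁻¹ * ∫ t in Set.Ioc (0:ℝ) T, ∑ α ∈ A₂, c₂ α * S7.chr α (f t)).re)
        atTop (nhds c₀.re) := (Complex.continuous_re.tendsto c₀).comp hfm
    set C₂ : ℝ := ∑ α ∈ A₂, ‖c₂ α‖ with hC₂def
    have hC₂nn : 0 ≤ C₂ := Finset.sum_nonneg fun α _ => norm_nonneg _
    have hwb : ∀ s, ‖w s‖ ≤ C₁ + c/8 := by
      intro s
      have h1 := hp₁' s
      have h2 := S7.poly_norm_le A₁ c₁ s
      calc ‖w s‖ = ‖(w s - ∑ α ∈ A₁, c₁ α * S7.chr α s) + ∑ α ∈ A₁, c₁ α * S7.chr α s‖ := by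
            congr 1; abel
        _ ≤ ‖w s - ∑ α ∈ A₁, c₁ α * S7.chr α s‖ + ‖∑ α ∈ A₁, c₁ α * S7.chr α s‖ :=
            norm_add_le _ _
        _ ≤ C₁ + c/8 := by rw [← hC₁def] at h2; linarith
    have hbdd : IsBoundedUnder (· ≤ ·) atTop (fun t => (w (f t)).re) := by
      refine ⟨C₁ + c/8, eventually_map.2 (Eventually.of_forall fun t => ?_)⟩
      calc (w (f t)).re ≤ ‖w (f t)‖ := Complex.re_le_norm _
        _ = ‖w (f t)‖ := rfl
        _ ≤ C₁ + c/8 := hwb (f t)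
    have hev : ∀ᶠ t : ℝ in atTop, (w (f t)).re < κ/8 :=
      eventually_lt_of_limsup_lt (by rw [hls]; positivity) hbdd
    obtain ⟨t₁, ht₁⟩ := eventually_atTop.1 hev
    set t₀ : ℝ := max t₁ 0 with ht₀def
    have ht₀0 : (0:ℝ) ≤ t₀ := le_max_right _ _
    have hmeasp : Measurable (fun t => ∑ α ∈ A₂, c₂ α * S7.chr α (f t)) :=
      Finset.measurable_sum _ fun α _ =>
        measurable_const.mul ((S7.chr_continuous α).measurable.comp hf)
    have hbp : ∀ t : ℝ, ‖∑ α ∈ A₂, c₂ α * S7.chr α (f t)‖ ≤ C₂ :=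
      fun t => S7.poly_norm_le A₂ c₂ (f t)
    have hup : ∀ᶠ T : ℝ in atTop,
        ((T:ℂ)⁻¹ * ∫ t in Set.Ioc (0:ℝ) T, ∑ α ∈ A₂, c₂ α * S7.chr α (f t)).re
          ≤ T⁻¹ * (C₂ * t₀) + κ/4 := by
      filter_upwards [eventually_ge_atTop (max t₀ 1)] with T hT
      have hTt₀ : t₀ ≤ T := le_trans (le_max_left _ _) hT
      have hT0 : (0:ℝ) < T := lt_of_lt_of_le one_pos (le_trans (le_max_right _ _) hT)
      have hintC : IntegrableOn (fun t => ∑ α ∈ A₂, c₂ α * S7.chr α (f t)) (Set.Ioc 0 T) :=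
        S7.integrableOn_Ioc_bounded hmeasp hbp 0 T
      have hre2 : ((T:ℂ)⁻¹ * ∫ t in Set.Ioc (0:ℝ) T, ∑ α ∈ A₂, c₂ α * S7.chr α (f t)).re
          = T⁻¹ * ∫ t in Set.Ioc (0:ℝ) T, (∑ α ∈ A₂, c₂ α * S7.chr α (f t)).re := by
        have hcast : ((T:ℂ))⁻¹ = (((T⁻¹) : ℝ) : ℂ) := by push_cast; ring
        rw [hcast, Complex.re_ofReal_mul]
        congr 1
        simp only [← RCLike.re_to_complex]
        exact (integral_re hintC).symm
      rw [hre2]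
      have hmre : Measurable (fun t => (∑ α ∈ A₂, c₂ α * S7.chr α (f t)).re) :=
        Complex.measurable_re.comp hmeasp
      have hbre : ∀ t : ℝ, ‖(∑ α ∈ A₂, c₂ α * S7.chr α (f t)).re‖ ≤ C₂ := by
        intro t
        rw [Real.norm_eq_abs]
        exact (Complex.abs_re_le_norm _).trans (hbp t)
      have hint1 : IntegrableOn (fun t => (∑ α ∈ A₂, c₂ α * S7.chr α (f t)).re) (Set.Ioc 0 t₀) :=
        S7.integrableOn_Ioc_bounded_real hmre hbre 0 t₀
      have hint2 : IntegrableOn (fun t => (∑ α ∈ A₂, c₂ α * S7.chr α (f t)).re) (Set.Ioc t₀ T) :=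
        S7.integrableOn_Ioc_bounded_real hmre hbre t₀ T
      have hunion : Set.Ioc (0:ℝ) T = Set.Ioc 0 t₀ ∪ Set.Ioc t₀ T :=
        (Set.Ioc_union_Ioc_eq_Ioc ht₀0 hTt₀).symm
      rw [hunion, setIntegral_union (Set.Ioc_disjoint_Ioc_of_le le_rfl) measurableSet_Ioc hint1 hint2]
      have b1 : ∫ t in Set.Ioc (0:ℝ) t₀, (∑ α ∈ A₂, c₂ α * S7.chr α (f t)).re ≤ C₂ * t₀ := by
        have h := norm_setIntegral_le_of_norm_le_const (μ := volume)
          (s := Set.Ioc (0:ℝ) t₀) measure_Ioc_lt_top (fun x _ => hbre x)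
        · rw [Real.norm_eq_abs] at h
          rw [Real.volume_real_Ioc_of_le ht₀0, sub_zero] at h
          exact (le_abs_self _).trans h
      have b2 : ∫ t in Set.Ioc t₀ T, (∑ α ∈ A₂, c₂ α * S7.chr α (f t)).re
          ≤ κ/4 * (T - t₀) := by
        have hptf : ∀ x ∈ Set.Ioc t₀ T, (∑ α ∈ A₂, c₂ α * S7.chr α (f x)).re ≤ κ/4 := by
          intro x hx
          have hx1 : t₁ ≤ x := le_trans (le_max_left _ _) hx.1.le
          have hwx := ht₁ x hx1
          have := (abs_le.1 (hpoint (f x))).1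
          linarith
        have h := setIntegral_mono_on hint2
          (integrableOn_const measure_Ioc_lt_top.ne) measurableSet_Ioc hptf
        rw [setIntegral_const, Real.volume_real_Ioc_of_le (by linarith),
          smul_eq_mul] at h
        calc ∫ t in Set.Ioc t₀ T, (∑ α ∈ A₂, c₂ α * S7.chr α (f t)).re
            ≤ (T - t₀) * (κ/4) := h
          _ = κ/4 * (T - t₀) := by ring
      have hTinv : T⁻¹ * T = 1 := inv_mul_cancel₀ hT0.ne'
      have hTipos : (0:ℝ) ≤ T⁻¹ := by positivity
      calc T⁻¹ * ((∫ t in Set.Ioc (0:ℝ) t₀, (∑ α ∈ A₂, c₂ α * S7.chr α (f t)).re)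
              + ∫ t in Set.Ioc t₀ T, (∑ α ∈ A₂, c₂ α * S7.chr α (f t)).re)
          ≤ T⁻¹ * (C₂ * t₀ + κ/4 * (T - t₀)) :=
            mul_le_mul_of_nonneg_left (add_le_add b1 b2) hTipos
        _ ≤ T⁻¹ * (C₂ * t₀) + κ/4 := by nlinarith [mul_nonneg hTipos ht₀0, hκ0.le]
    have hc₀up : c₀.re ≤ κ/4 := by
      refine le_of_tendsto_of_tendsto hfmre ?_ hup
      have hlim : Tendsto (fun T : ℝ => T⁻¹ * (C₂ * t₀) + κ/4) atTop (nhds (0 * (C₂ * t₀) + κ/4)) :=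
        (tendsto_inv_atTop_zero.mul_const (C₂ * t₀)).add tendsto_const_nhds
      simpa using hlim
    linarith
  · intro h
    have hzero : (fun t : ℝ => (w (f t)).re) = fun _ => (0:ℝ) := funext fun t => by
      rw [h (f t)]; simp
    rw [hzero]
    exact limsup_const 0
end

section
/- Let a ∈ ℝ, r ∈ ℕ, and let τ : [a,∞) → ℂ be C^r with τ, τ', ..., τ^{(r)} all bounded on [a,∞) and τ nonvanishing. If f : [a,∞) → ℂ is C^r and for each k = 0,...,r the function f^{(k)}/τ^{r-k+1} is bounded on [a,∞), then (f/τ)^{(j)} is bounded on [a,∞) for j = 0,...,r. -/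
namespace Stmt11Aux

/-- A formal term: coefficient, order of derivative of `f`, list of orders of
derivatives of `τ` appearing as factors. -/
abbrev Term := ℤ × ℕ × List ℕ

/-- Formal derivative of a monomial in derivatives of `τ`. -/
def dmono : List ℕ → List (List ℕ)
  | [] => []
  | m :: L => ((m + 1) :: L) :: (dmono L).map (m :: ·)

/-- Formal derivative of a term at level `n`. -/
def termDeriv (n : ℕ) (x : Term) : List Term :=
  ((dmono x.2.2).map fun L' => (x.1, x.2.1, 0 :: L')) ++
    [(x.1, x.2.1 + 1, x.2.2), (x.1 * -((n - x.2.1 + 1 : ℕ) : ℤ), x.2.1, 1 :: x.2.2)]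

/-- The formal expression for the `n`-th derivative of `f/τ`. -/
def expr : ℕ → List Term
  | 0 => [(1, 0, [])]
  | n + 1 => (expr n).flatMap (termDeriv n)

def good (n : ℕ) (x : Term) : Prop := x.2.1 ≤ n ∧ ∀ m ∈ x.2.2, m ≤ n

lemma dmono_le {L : List ℕ} {n : ℕ} (h : ∀ m ∈ L, m ≤ n) :
    ∀ L' ∈ dmono L, ∀ m ∈ L', m ≤ n + 1 := by
  induction L with
  | nil => simp [dmono]
  | cons a L ih =>
    intro L' hL' m hm
    simp only [dmono, List.mem_cons, List.mem_map] at hL'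
    rcases hL' with rfl | ⟨L'', hL'', rfl⟩
    · rcases List.mem_cons.1 hm with rfl | hm
      · have := h a (by simp); omega
      · exact le_trans (h m (by simp [hm])) (by omega)
    · rcases List.mem_cons.1 hm with rfl | hm
      · have := h m (by simp); omega
      · exact ih (fun m hm => h m (by simp [hm])) _ hL'' m hm

lemma good_expr : ∀ n, ∀ x ∈ expr n, good n x := by
  intro n
  induction n with
  | zero => intro x hx; simp [expr] at hx; subst hx; exact ⟨le_refl _, by simp⟩
  | succ n ih =>
    intro x hx
    simp only [expr, List.mem_flatMap] at hx
    obtain ⟨y, hy, hx⟩ := hx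
    obtain ⟨c, k, L⟩ := y
    obtain ⟨hk, hL⟩ := ih _ hy
    simp only at hk hL
    simp only [termDeriv, List.mem_append, List.mem_map, List.mem_cons,
      List.not_mem_nil, or_false] at hx
    rcases hx with ⟨L', hL', rfl⟩ | rfl | rfl <;> dsimp only [good]
    · exact ⟨by omega, by
        intro m hm
        rcases List.mem_cons.1 hm with rfl | hm
        · omega
        · exact dmono_le hL L' hL' m hm⟩
    · exact ⟨by omega, fun m hm => le_trans (hL m hm) (by omega)⟩
    · refine ⟨by omega, ?_⟩
      intro m hm
      rcases List.mem_cons.1 hm with rfl | hm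
      · omega
      · exact le_trans (hL m hm) (by omega)

variable (τ f : ℝ → ℂ) (s : Set ℝ)

/-- Value of a monomial. -/
noncomputable def mono (L : List ℕ) (t : ℝ) : ℂ := (L.map fun m => iteratedDerivWithin m τ s t).prod

/-- Value of a term at level `n`. -/
noncomputable def tval (n : ℕ) (x : Term) (t : ℝ) : ℂ :=
  (x.1 : ℂ) * mono τ s x.2.2 t * iteratedDerivWithin x.2.1 f s t /
    (τ t) ^ (n - x.2.1 + 1)

/-- Value of a list of terms. -/
noncomputable def sval (n : ℕ) (T : List Term) (t : ℝ) : ℂ := (T.map fun x => tval τ f s n x t).sum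

lemma mono_cons (m : ℕ) (L : List ℕ) (t : ℝ) :
    mono τ s (m :: L) t = iteratedDerivWithin m τ s t * mono τ s L t := by
  simp [mono]

lemma lsum_mul {α : Type*} (l : List α) (g : α → ℂ) (B : ℂ) :
    (l.map fun y => g y * B).sum = (l.map g).sum * B := by
  induction l with
  | nil => simp
  | cons h t ih => simp [ih, add_mul]

lemma sval_flatMap (n : ℕ) (T : List Term) (D : Term → List Term) (t : ℝ) :
    sval τ f s n (T.flatMap D) t = (T.map fun x => sval τ f s n (D x) t).sum := by
  induction T with
  | nil => simp [sval]
  | cons x T ih => simp only [List.flatMap_cons, sval, List.map_append,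
      List.sum_append, List.map_cons, List.sum_cons] at *; rw [ih]

section Analytic

variable {a : ℝ} {r : ℕ}

/-- Helper: `HasDerivWithinAt` for complex powers of a real-to-complex function. -/
lemma hasDerivWithinAt_cpow {g : ℝ → ℂ} {g' : ℂ} {t : ℝ}
    (h : HasDerivWithinAt g g' (Set.Ici a) t) (e : ℕ) :
    HasDerivWithinAt (fun u => g u ^ e) ((e : ℂ) * g t ^ (e - 1) * g') (Set.Ici a) t := by
  induction e with
  | zero => simpa using hasDerivWithinAt_const t (Set.Ici a) (1 : ℂ)
  | succ e ih =>
    have := ih.mul h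
    have heq : (e : ℂ) * g t ^ (e - 1) * g' * g t + g t ^ e * g' =
        ((e + 1 : ℕ) : ℂ) * g t ^ (e + 1 - 1) * g' := by
      rw [Nat.add_sub_cancel]
      cases e with
      | zero => simp
      | succ d =>
        rw [Nat.succ_sub_one]
        have hgs : g t ^ d * g t = g t ^ (d + 1) := (pow_succ _ _).symm
        push_cast
        linear_combination ((d : ℂ) + 1) * g' * hgs
    simpa only [pow_succ, heq, Pi.mul_def] using this

lemma hasDerivWithinAt_iter {g : ℝ → ℂ} (hg : ContDiffOn ℝ r g (Set.Ici a))
    {m : ℕ} (hm : m < r) {t : ℝ} (ht : t ∈ Set.Ici a) :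
    HasDerivWithinAt (iteratedDerivWithin m g (Set.Ici a))
      (iteratedDerivWithin (m + 1) g (Set.Ici a) t) (Set.Ici a) t := by
  have hd : DifferentiableWithinAt ℝ (iteratedDerivWithin m g (Set.Ici a)) (Set.Ici a) t :=
    (hg.differentiableOn_iteratedDerivWithin (by exact_mod_cast hm) (uniqueDiffOn_Ici a)) t ht
  have := hd.hasDerivWithinAt
  rwa [← iteratedDerivWithin_succ] at this

lemma mono_hasDeriv (hτc : ContDiffOn ℝ r τ (Set.Ici a)) {t : ℝ} (ht : t ∈ Set.Ici a)
    {L : List ℕ} (hL : ∀ m ∈ L, m < r) :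
    HasDerivWithinAt (fun u => mono τ (Set.Ici a) L u)
      (((dmono L).map fun L' => mono τ (Set.Ici a) L' t).sum) (Set.Ici a) t := by
  induction L with
  | nil =>
    simpa [mono, dmono] using hasDerivWithinAt_const t (Set.Ici a) (1 : ℂ)
  | cons m L ih =>
    have h1 := hasDerivWithinAt_iter hτc (hL m (by simp)) ht
    have h2 := ih (fun m hm => hL m (by simp [hm]))
    have h3 := h1.mul h2
    have heq : iteratedDerivWithin (m + 1) τ (Set.Ici a) t * mono τ (Set.Ici a) L t +
        iteratedDerivWithin m τ (Set.Ici a) t *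
          ((dmono L).map fun L' => mono τ (Set.Ici a) L' t).sum =
        ((dmono (m :: L)).map fun L' => mono τ (Set.Ici a) L' t).sum := by
      simp only [dmono, List.map_cons, List.sum_cons, List.map_map]
      rw [mono_cons]
      congr 1
      have : ∀ L' : List ℕ, mono τ (Set.Ici a) (m :: L') t =
          mono τ (Set.Ici a) L' t * iteratedDerivWithin m τ (Set.Ici a) t := by
        intro L'; rw [mono_cons]; ring
      calc iteratedDerivWithin m τ (Set.Ici a) t *
            ((dmono L).map fun L' => mono τ (Set.Ici a) L' t).sum
          = ((dmono L).map fun L' => mono τ (Set.Ici a) L' t).sum *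
            iteratedDerivWithin m τ (Set.Ici a) t := by ring
        _ = ((dmono L).map fun L' =>
              mono τ (Set.Ici a) L' t * iteratedDerivWithin m τ (Set.Ici a) t).sum := by
            rw [lsum_mul]
        _ = _ := by
            congr 1
            apply List.map_congr_left
            intro L' _
            simp only [Function.comp]
            rw [this L']
    have h4 : HasDerivWithinAt (fun u => mono τ (Set.Ici a) (m :: L) u)
        (iteratedDerivWithin (m + 1) τ (Set.Ici a) t * mono τ (Set.Ici a) L t +
          iteratedDerivWithin m τ (Set.Ici a) t *
            ((dmono L).map fun L' => mono τ (Set.Ici a) L' t).sum) (Set.Ici a) t := by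
      have : (fun u => mono τ (Set.Ici a) (m :: L) u) =
          fun u => iteratedDerivWithin m τ (Set.Ici a) u * mono τ (Set.Ici a) L u := by
        funext u; rw [mono_cons]
      rw [this]
      exact h3
    rwa [heq] at h4

lemma tval_hasDeriv (hτc : ContDiffOn ℝ r τ (Set.Ici a))
    (hτ0 : ∀ t ∈ Set.Ici a, τ t ≠ 0)
    (hfc : ContDiffOn ℝ r f (Set.Ici a))
    {n : ℕ} (hn : n < r) {t : ℝ} (ht : t ∈ Set.Ici a)
    {x : Term} (hx : good n x) :
    HasDerivWithinAt (fun u => tval τ f (Set.Ici a) n x u)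
      (sval τ f (Set.Ici a) (n + 1) (termDeriv n x) t) (Set.Ici a) t := by
  obtain ⟨c, k, L⟩ := x
  obtain ⟨hk, hL⟩ := hx
  simp only at hk hL
  set u' : ℂ := ((dmono L).map fun L' => mono τ (Set.Ici a) L' t).sum with hu'
  have hmono := mono_hasDeriv τ hτc ht (L := L) (fun m hm => lt_of_le_of_lt (hL m hm) hn)
  have hDf := hasDerivWithinAt_iter hfc (lt_of_le_of_lt hk hn) ht
  have hτ1 : HasDerivWithinAt τ (iteratedDerivWithin 1 τ (Set.Ici a) t) (Set.Ici a) t := by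
    have := hasDerivWithinAt_iter hτc (lt_of_le_of_lt (Nat.zero_le n) hn) ht
    rwa [iteratedDerivWithin_zero] at this
  set p := n - k with hp
  have hek : n - k + 1 = p + 1 := rfl
  have hτt : τ t ≠ 0 := hτ0 t ht
  -- derivative of the numerator
  have hnum : HasDerivWithinAt
      (fun u => (c : ℂ) * mono τ (Set.Ici a) L u * iteratedDerivWithin k f (Set.Ici a) u)
      ((c : ℂ) * u' * iteratedDerivWithin k f (Set.Ici a) t +
        (c : ℂ) * mono τ (Set.Ici a) L t * iteratedDerivWithin (k + 1) f (Set.Ici a) t) (Set.Ici a) t := by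
    have h1 : HasDerivWithinAt (fun u => (c : ℂ) * mono τ (Set.Ici a) L u) ((c : ℂ) * u') (Set.Ici a) t :=
      hmono.const_mul _
    have h2 := h1.mul hDf
    simpa [Pi.mul_def] using h2
  have hpow : HasDerivWithinAt (fun u => (τ u) ^ (p + 1))
      (((p + 1 : ℕ) : ℂ) * τ t ^ p * iteratedDerivWithin 1 τ (Set.Ici a) t) (Set.Ici a) t := by
    have := hasDerivWithinAt_cpow hτ1 (p + 1)
    simpa using this
  have hdiv := hnum.div hpow (pow_ne_zero _ hτt)
  -- now identify the value
  have hval : ((c : ℂ) * u' * iteratedDerivWithin k f (Set.Ici a) t +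
        (c : ℂ) * mono τ (Set.Ici a) L t * iteratedDerivWithin (k + 1) f (Set.Ici a) t) * τ t ^ (p + 1) -
        (c : ℂ) * mono τ (Set.Ici a) L t * iteratedDerivWithin k f (Set.Ici a) t *
          (((p + 1 : ℕ) : ℂ) * τ t ^ p * iteratedDerivWithin 1 τ (Set.Ici a) t) =
      ((τ t ^ (p + 1)) ^ 2) *
      (u' * ((c : ℂ) * τ t * iteratedDerivWithin k f (Set.Ici a) t / τ t ^ (p + 2)) +
        ((c : ℂ) * mono τ (Set.Ici a) L t * iteratedDerivWithin (k + 1) f (Set.Ici a) t / τ t ^ (p + 1) +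
        ((c * -((p + 1 : ℕ) : ℤ) : ℤ) : ℂ) *
          (iteratedDerivWithin 1 τ (Set.Ici a) t * mono τ (Set.Ici a) L t) *
          iteratedDerivWithin k f (Set.Ici a) t / τ t ^ (p + 2))) := by
    push_cast
    field_simp
    try ring
  have hsval : sval τ f (Set.Ici a) (n + 1) (termDeriv n (c, k, L)) t =
      u' * ((c : ℂ) * τ t * iteratedDerivWithin k f (Set.Ici a) t / τ t ^ (p + 2)) +
        ((c : ℂ) * mono τ (Set.Ici a) L t * iteratedDerivWithin (k + 1) f (Set.Ici a) t / τ t ^ (p + 1) +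
        ((c * -((p + 1 : ℕ) : ℤ) : ℤ) : ℂ) *
          (iteratedDerivWithin 1 τ (Set.Ici a) t * mono τ (Set.Ici a) L t) *
          iteratedDerivWithin k f (Set.Ici a) t / τ t ^ (p + 2)) := by
    simp only [sval, termDeriv, List.map_append, List.sum_append, List.map_cons,
      List.sum_cons, List.map_map, List.sum_nil, add_zero]
    congr 1
    · -- the monomial-derivative part
      rw [hu']
      rw [← lsum_mul]
      congr 1
      apply List.map_congr_left
      intro L' _
      simp only [Function.comp, tval, mono_cons]
      have h1 : n + 1 - k + 1 = p + 2 := by omega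
      rw [h1, iteratedDerivWithin_zero]
      ring
    · -- the two remaining terms
      congr 1
      · simp only [tval]
        have h1 : n + 1 - (k + 1) + 1 = p + 1 := by omega
        rw [h1]
      · simp only [tval, mono_cons, List.map_nil, List.sum_nil, add_zero]
        have h1 : n + 1 - k + 1 = p + 2 := by omega
        rw [h1, hek]
  rw [hsval]
  have h3 : (fun u => tval τ f (Set.Ici a) n (c, k, L) u) =
      fun u => (c : ℂ) * mono τ (Set.Ici a) L u * iteratedDerivWithin k f (Set.Ici a) u / τ u ^ (p + 1) := by
    funext u
    simp only [tval, hek]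
  rw [hval, mul_div_cancel_left₀ _ (pow_ne_zero 2 (pow_ne_zero _ hτt))] at hdiv
  rw [h3]
  exact hdiv

lemma hasDeriv_list_sum {α : Type*} {a : ℝ} (T : List α) (g : α → ℝ → ℂ) (v : α → ℂ) {t : ℝ}
    (h : ∀ x ∈ T, HasDerivWithinAt (g x) (v x) (Set.Ici a) t) :
    HasDerivWithinAt (fun u => (T.map fun x => g x u).sum) ((T.map v).sum) (Set.Ici a) t := by
  induction T with
  | nil => simpa using hasDerivWithinAt_const t (Set.Ici a) (0 : ℂ)
  | cons x T ih =>
    have h1 := (h x (by simp)).add (ih fun y hy => h y (by simp [hy]))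
    simpa [Pi.add_def] using h1

/-- The main identity. -/
lemma main_identity (hτc : ContDiffOn ℝ r τ (Set.Ici a))
    (hτ0 : ∀ t ∈ Set.Ici a, τ t ≠ 0)
    (hfc : ContDiffOn ℝ r f (Set.Ici a)) :
    ∀ n ≤ r, ∀ t ∈ Set.Ici a,
      iteratedDerivWithin n (fun u => f u / τ u) (Set.Ici a) t =
        sval τ f (Set.Ici a) n (expr n) t := by
  intro n
  induction n with
  | zero =>
    intro _ t ht
    simp [sval, expr, tval, mono, iteratedDerivWithin_zero]
  | succ n ih =>
    intro hn t ht
    have hn' : n ≤ r := by omega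
    have hnr : n < r := by omega
    rw [iteratedDerivWithin_succ]
    rw [derivWithin_congr (fun u hu => ih hn' u hu) (ih hn' t ht)]
    have hderiv : HasDerivWithinAt (fun u => sval τ f (Set.Ici a) n (expr n) u)
        ((expr n).map (fun x => sval τ f (Set.Ici a) (n + 1) (termDeriv n x) t)).sum
        (Set.Ici a) t := by
      exact hasDeriv_list_sum (expr n) (fun x u => tval τ f (Set.Ici a) n x u)
        (fun x => sval τ f (Set.Ici a) (n + 1) (termDeriv n x) t)
        (fun x hx => tval_hasDeriv τ f hτc hτ0 hfc hnr ht (good_expr n x hx))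
    rw [hderiv.derivWithin (uniqueDiffOn_Ici a t ht)]
    rw [show expr (n + 1) = (expr n).flatMap (termDeriv n) from rfl]
    rw [sval_flatMap]

/-- Boundedness of monomials. -/
lemma mono_bound (hτb : ∀ k ≤ r, ∃ C : ℝ, ∀ t ∈ Set.Ici a,
      ‖iteratedDerivWithin k τ (Set.Ici a) t‖ ≤ C)
    {L : List ℕ} (hL : ∀ m ∈ L, m ≤ r) :
    ∃ C : ℝ, 0 ≤ C ∧ ∀ t ∈ Set.Ici a, ‖mono τ (Set.Ici a) L t‖ ≤ C := by
  induction L with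
  | nil => exact ⟨1, zero_le_one, fun t _ => by simp [mono]⟩
  | cons m L ih =>
    obtain ⟨C1, hC1⟩ := hτb m (hL m (by simp))
    obtain ⟨C2, hC2pos, hC2⟩ := ih (fun m hm => hL m (by simp [hm]))
    refine ⟨max C1 0 * C2, mul_nonneg (le_max_right _ _) hC2pos, fun t ht => ?_⟩
    rw [mono_cons, norm_mul]
    exact mul_le_mul (le_trans (hC1 t ht) (le_max_left _ _)) (hC2 t ht)
      (norm_nonneg _) (le_max_right _ _)

/-- Boundedness of a term value. -/
lemma tval_bound (hτb : ∀ k ≤ r, ∃ C : ℝ, ∀ t ∈ Set.Ici a,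
      ‖iteratedDerivWithin k τ (Set.Ici a) t‖ ≤ C)
    (hτ0 : ∀ t ∈ Set.Ici a, τ t ≠ 0)
    (hfb : ∀ k ≤ r, ∃ C : ℝ, ∀ t ∈ Set.Ici a,
      ‖iteratedDerivWithin k f (Set.Ici a) t / (τ t) ^ (r - k + 1)‖ ≤ C)
    {j : ℕ} (hj : j ≤ r) {x : Term} (hx : good j x) :
    ∃ C : ℝ, ∀ t ∈ Set.Ici a, ‖tval τ f (Set.Ici a) j x t‖ ≤ C := by
  obtain ⟨c, k, L⟩ := x
  obtain ⟨hk, hL⟩ := hx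
  simp only at hk hL
  obtain ⟨Cm, hCmpos, hCm⟩ := mono_bound τ hτb (fun m hm => le_trans (hL m hm) hj)
  obtain ⟨Cf, hCf⟩ := hfb k (le_trans hk hj)
  obtain ⟨Cτ, hCτ⟩ := hτb 0 (Nat.zero_le r)
  refine ⟨‖(c : ℂ)‖ * Cm * (max Cf 0 * (max Cτ 0) ^ (r - j)), fun t ht => ?_⟩
  have hτt : τ t ≠ 0 := hτ0 t ht
  have hsplit : tval τ f (Set.Ici a) j (c, k, L) t =
      (c : ℂ) * mono τ (Set.Ici a) L t *
        (iteratedDerivWithin k f (Set.Ici a) t / (τ t) ^ (r - k + 1) * (τ t) ^ (r - j)) := by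
    simp only [tval]
    rw [show r - k + 1 = (j - k + 1) + (r - j) by omega, pow_add]
    field_simp
    ring
  rw [hsplit, norm_mul, norm_mul, norm_mul, norm_pow]
  have h1 : ‖iteratedDerivWithin k f (Set.Ici a) t / (τ t) ^ (r - k + 1)‖ ≤ max Cf 0 :=
    le_trans (hCf t ht) (le_max_left _ _)
  have h2 : ‖τ t‖ ^ (r - j) ≤ (max Cτ 0) ^ (r - j) := by
    apply pow_le_pow_left₀ (norm_nonneg _)
    have := hCτ t ht
    rw [iteratedDerivWithin_zero] at this
    exact le_trans this (le_max_left _ _)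
  have h3 : ‖iteratedDerivWithin k f (Set.Ici a) t / (τ t) ^ (r - k + 1)‖ * ‖τ t‖ ^ (r - j) ≤
      max Cf 0 * (max Cτ 0) ^ (r - j) :=
    mul_le_mul h1 h2 (by positivity) (le_max_right _ _)
  apply mul_le_mul _ h3 (by positivity) (by positivity)
  exact mul_le_mul le_rfl (hCm t ht) (norm_nonneg _) (norm_nonneg _)

lemma sval_bound {j : ℕ} (T : List Term)
    (h : ∀ x ∈ T, ∃ C : ℝ, ∀ t ∈ Set.Ici a, ‖tval τ f (Set.Ici a) j x t‖ ≤ C) :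
    ∃ C : ℝ, ∀ t ∈ Set.Ici a, ‖sval τ f (Set.Ici a) j T t‖ ≤ C := by
  induction T with
  | nil => exact ⟨0, fun t _ => by simp [sval]⟩
  | cons x T ih =>
    obtain ⟨C1, hC1⟩ := h x (by simp)
    obtain ⟨C2, hC2⟩ := ih fun y hy => h y (by simp [hy])
    refine ⟨C1 + C2, fun t ht => ?_⟩
    have : sval τ f (Set.Ici a) j (x :: T) t =
        tval τ f (Set.Ici a) j x t + sval τ f (Set.Ici a) j T t := by simp [sval]
    rw [this]
    exact le_trans (norm_add_le _ _) (add_le_add (hC1 t ht) (hC2 t ht))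

end Analytic

end Stmt11Aux

/-- If `τ` is `C^r` on `[a,∞)` with `τ, τ', …, τ^{(r)}` bounded and `τ` nonvanishing
there, and `f` is `C^r` on `[a,∞)` with `f^{(k)}/τ^{r−k+1}` bounded for `k = 0,…,r`,
then `(f/τ)^{(j)}` is bounded on `[a,∞)` for `j = 0,…,r`. -/
theorem stmt11 (a : ℝ) (r : ℕ) (τ f : ℝ → ℂ)
    (hτ : ContDiffOn ℝ r τ (Set.Ici a))
    (hτb : ∀ k ≤ r, ∃ C : ℝ, ∀ t ∈ Set.Ici a,
      ‖iteratedDerivWithin k τ (Set.Ici a) t‖ ≤ C)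
    (hτ0 : ∀ t ∈ Set.Ici a, τ t ≠ 0)
    (hfc : ContDiffOn ℝ r f (Set.Ici a))
    (hfb : ∀ k ≤ r, ∃ C : ℝ, ∀ t ∈ Set.Ici a,
      ‖iteratedDerivWithin k f (Set.Ici a) t / (τ t) ^ (r - k + 1)‖ ≤ C) :
    ∀ j ≤ r, ∃ C : ℝ, ∀ t ∈ Set.Ici a,
      ‖iteratedDerivWithin j (fun s => f s / τ s) (Set.Ici a) t‖ ≤ C := by
  intro j hj
  have hid := Stmt11Aux.main_identity τ f hτ hτ0 hfc j hj
  obtain ⟨C, hC⟩ := Stmt11Aux.sval_bound τ f (j := j) (Stmt11Aux.expr j)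
    (fun x hx => Stmt11Aux.tval_bound τ f hτb hτ0 hfb hj (Stmt11Aux.good_expr j x hx))
  exact ⟨C, fun t ht => by rw [hid t ht]; exact hC t ht⟩
end

section
/- Let a ∈ ℝ, ε > 0, and let φ : [a,∞) → ℂ be continuous with Re φ(t) ≥ ε for all t ≥ a, and Φ(t) = ∫_a^t φ(s) ds. Then for every bounded continuous f : [a,∞) → ℂ, the function e^{−Φ} f is integrable at ∞ (the improper integral ∫_a^∞ e^{−Φ(s)} f(s) ds converges), and (Bf)(t) := e^{Φ(t)} ∫_∞^t e^{−Φ(s)} f(s) ds defines a C¹ function satisfying (Bf)' − φ·(Bf) = f and sup_{t ≥ a} |Bf(t)| ≤ sup_{t ≥ a} |f(t)| · sup_{t ≥ a} |1/Re φ(t)|. -/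
open MeasureTheory Filter intervalIntegral

/-- Twisted integration operator (repulsive case):
`(Bf)(t) = e^{Φ(t)} ∫_∞^t e^{−Φ(s)} f(s) ds` where `Φ(t) = ∫_a^t φ(s) ds` and
`∫_∞^t = −∫_t^∞`. -/
noncomputable def twistIntR (a : ℝ) (φ f : ℝ → ℂ) : ℝ → ℂ := fun t =>
  Complex.exp (∫ s in a..t, φ s) *
    -(∫ s in Set.Ioi t, Complex.exp (-(∫ u in a..s, φ u)) * f s)

/-- FTC: primitive of a continuous function has the function as derivative. -/
lemma aux_ftc (a : ℝ) (g : ℝ → ℂ) (hg : Continuous g) (t : ℝ) :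
    HasDerivAt (fun x => ∫ u in a..x, g u) (g t) t :=
  intervalIntegral.integral_hasDerivAt_right (hg.intervalIntegrable a t)
    (hg.stronglyMeasurable.stronglyMeasurableAtFilter) hg.continuousAt

/-- Key growth inequality for the primitive of a function with real part `≥ δ`. -/
lemma aux_key (a δ t s : ℝ) (ψ : ℝ → ℂ) (hψ : Continuous ψ) (hδ : ∀ u, δ ≤ (ψ u).re)
    (hts : t ≤ s) :
    (∫ u in a..t, ψ u).re + δ * (s - t) ≤ (∫ u in a..s, ψ u).re := by
  have hadd := intervalIntegral.integral_add_adjacent_intervals (μ := volume)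
    (hψ.intervalIntegrable a t) (hψ.intervalIntegrable t s)
  have hre : (∫ u in t..s, ψ u).re = ∫ u in t..s, (ψ u).re := by
    have := Complex.reCLM.intervalIntegral_comp_comm (μ := volume)
      (hψ.intervalIntegrable t s : IntervalIntegrable ψ volume t s)
    simpa using this.symm
  have hmono : (∫ u in t..s, (δ : ℝ)) ≤ ∫ u in t..s, (ψ u).re :=
    intervalIntegral.integral_mono_on hts (intervalIntegrable_const)
      ((Complex.continuous_re.comp hψ).intervalIntegrable t s) (fun u _ => hδ u)
  rw [intervalIntegral.integral_const, smul_eq_mul] at hmono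
  have : (∫ u in a..s, ψ u).re = (∫ u in a..t, ψ u).re + (∫ u in t..s, ψ u).re := by
    rw [← hadd, Complex.add_re]
  rw [this, hre]
  nlinarith

/-- Repulsive twisted integration: if `Re φ ≥ ε > 0` on `[a,∞)` and `f` is bounded and
continuous on `[a,∞)`, then `e^{−Φ} f` is integrable at `∞`, and `B f` is `C¹` with
`(Bf)' − φ·(Bf) = f` and `sup_{t≥a}|Bf(t)| ≤ sup_{t≥a}|f(t)| · sup_{t≥a}|1/Re φ(t)|`. -/
theorem stmt14 (a ε : ℝ) (hε : 0 < ε) (φ f : ℝ → ℂ)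
    (hφc : ContinuousOn φ (Set.Ici a))
    (hφ : ∀ t ∈ Set.Ici a, ε ≤ (φ t).re)
    (hfc : ContinuousOn f (Set.Ici a))
    (Cf : ℝ) (hf : ∀ t ∈ Set.Ici a, ‖f t‖ ≤ Cf) :
    MeasureTheory.IntegrableOn
      (fun s => Complex.exp (-(∫ u in a..s, φ u)) * f s) (Set.Ici a) ∧
    (∀ t ∈ Set.Ici a,
      HasDerivWithinAt (twistIntR a φ f) (φ t * twistIntR a φ f t + f t) (Set.Ici a) t) ∧
    (∀ Cr : ℝ, (∀ t ∈ Set.Ici a, |1 / (φ t).re| ≤ Cr) →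
      ∀ t ∈ Set.Ici a, ‖twistIntR a φ f t‖ ≤ Cf * Cr) := by
  have ha : a ∈ Set.Ici a := Set.self_mem_Ici
  have hCf : (0:ℝ) ≤ Cf := le_trans (norm_nonneg _) (hf a ha)
  set ψ : ℝ → ℂ := fun x => φ (max x a) with hψdef
  set ft : ℝ → ℂ := fun x => f (max x a) with hftdef
  have hmax : ∀ x : ℝ, max x a ∈ Set.Ici a := fun x => le_max_right x a
  have hψc : Continuous ψ :=
    hφc.comp_continuous (continuous_id.max continuous_const) hmax
  have hftc : Continuous ft :=
    hfc.comp_continuous (continuous_id.max continuous_const) hmax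
  have hψeq : ∀ x ∈ Set.Ici a, ψ x = φ x := fun x hx => by
    simp [hψdef, max_eq_left (Set.mem_Ici.mp hx)]
  have hfteq : ∀ x ∈ Set.Ici a, ft x = f x := fun x hx => by
    simp [hftdef, max_eq_left (Set.mem_Ici.mp hx)]
  set F : ℝ → ℂ := fun x => ∫ u in a..x, ψ u with hFdef
  have hFeq : ∀ x ∈ Set.Ici a, (∫ u in a..x, φ u) = F x := fun x hx => by
    refine intervalIntegral.integral_congr fun u hu => ?_
    rw [Set.uIcc_of_le hx] at hu
    exact (hψeq u (le_trans hu.1 le_rfl : a ≤ u)).symm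
  have hFd : ∀ t, HasDerivAt F (ψ t) t := aux_ftc a ψ hψc
  have hFc : Continuous F := continuous_iff_continuousAt.2 fun t => (hFd t).continuousAt
  set g : ℝ → ℂ := fun s => Complex.exp (-F s) * ft s with hgdef
  have hgc : Continuous g := (hFc.neg.cexp).mul hftc
  have hgeq : ∀ s ∈ Set.Ici a, Complex.exp (-(∫ u in a..s, φ u)) * f s = g s := fun s hs => by
    rw [hgdef]; dsimp only; rw [hFeq s hs, hfteq s hs]
  have hεψ : ∀ u, ε ≤ (ψ u).re := fun u => hφ _ (hmax u)
  -- norm bound on g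
  have hgnorm : ∀ δ : ℝ, (∀ u, δ ≤ (ψ u).re) → ∀ t s : ℝ, t ≤ s →
      ‖g s‖ ≤ Cf * Real.exp (-(F t).re - δ * (s - t)) := by
    intro δ hδ t s hts
    have hkey := aux_key a δ t s ψ hψc hδ hts
    have h1 : ‖g s‖ = Real.exp (-(F s).re) * ‖ft s‖ := by
      rw [hgdef]; dsimp only
      rw [norm_mul, Complex.norm_exp, Complex.neg_re]
    rw [h1, mul_comm Cf]
    exact mul_le_mul (Real.exp_le_exp.2 (by linarith)) (hf _ (hmax s)) (norm_nonneg _)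
      (Real.exp_nonneg _)
  -- integrability of g on [a, ∞)
  have hgint : IntegrableOn g (Set.Ici a) := by
    have hbd : IntegrableOn (fun s => (Cf * Real.exp (ε * a)) * Real.exp (-ε * s))
        (Set.Ici a) := by
      rw [integrableOn_Ici_iff_integrableOn_Ioi]
      exact (exp_neg_integrableOn_Ioi a hε).const_mul _
    refine Integrable.mono' hbd (hgc.aestronglyMeasurable.restrict) ?_
    refine (ae_restrict_iff' measurableSet_Ici).2 (ae_of_all _ fun s hs => ?_)
    have h1 := hgnorm ε hεψ a s hs
    have hFa : F a = 0 := intervalIntegral.integral_same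
    rw [hFa] at h1
    calc ‖g s‖ ≤ Cf * Real.exp (-(0:ℂ).re - ε * (s - a)) := h1
      _ = Cf * Real.exp (ε * a) * Real.exp (-ε * s) := by
          rw [mul_assoc, ← Real.exp_add]; congr 2; simp; ring
  have hgint' : IntegrableOn (fun s => Complex.exp (-(∫ u in a..s, φ u)) * f s)
      (Set.Ici a) :=
    hgint.congr_fun (fun s hs => (hgeq s hs).symm) measurableSet_Ici
  -- splitting the improper integral
  set C : ℂ := ∫ s in Set.Ioi a, g s with hCdef
  have hIoisub : ∀ t ∈ Set.Ici a, Set.Ioi t ⊆ Set.Ici a := fun t ht =>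
    Set.Ioi_subset_Ici_self.trans (Set.Ici_subset_Ici.2 ht)
  have hsplit : ∀ t ∈ Set.Ici a, (∫ s in Set.Ioi t, g s) = C - ∫ s in a..t, g s := by
    intro t ht
    have hU : Set.Ioc a t ∪ Set.Ioi t = Set.Ioi a := Set.Ioc_union_Ioi_eq_Ioi ht
    have h1 : IntegrableOn g (Set.Ioc a t) :=
      hgint.mono_set (Set.Ioc_subset_Icc_self.trans (Set.Icc_subset_Ici_self))
    have h2 : IntegrableOn g (Set.Ioi t) := hgint.mono_set (hIoisub t ht)
    have := MeasureTheory.setIntegral_union (Set.Ioc_disjoint_Ioi_same)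
      measurableSet_Ioi h1 h2
    rw [hU] at this
    rw [intervalIntegral.integral_of_le ht, ← hCdef] at *
    rw [this]; ring
  have htweq : ∀ t ∈ Set.Ici a,
      twistIntR a φ f t = Complex.exp (F t) * ((∫ s in a..t, g s) - C) := by
    intro t ht
    rw [twistIntR, hFeq t ht]
    have hin : (∫ s in Set.Ioi t, Complex.exp (-(∫ u in a..s, φ u)) * f s)
        = ∫ s in Set.Ioi t, g s :=
      MeasureTheory.setIntegral_congr_fun measurableSet_Ioi
        (fun s hs => hgeq s (hIoisub t ht hs))
    rw [hin, hsplit t ht]; ring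
  refine ⟨hgint', ?_, ?_⟩
  · -- derivative
    intro t ht
    have hGd : HasDerivAt (fun x => ∫ s in a..x, g s) (g t) t := aux_ftc a g hgc t
    have hBd : HasDerivAt (fun x => Complex.exp (F x) * ((∫ s in a..x, g s) - C))
        (Complex.exp (F t) * ψ t * ((∫ s in a..t, g s) - C) + Complex.exp (F t) * g t) t :=
      ((hFd t).cexp.mul (hGd.sub_const C))
    have hval : Complex.exp (F t) * ψ t * ((∫ s in a..t, g s) - C) + Complex.exp (F t) * g t
        = φ t * twistIntR a φ f t + f t := by
      rw [htweq t ht, hψeq t ht, hgdef]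
      dsimp only
      rw [hfteq t ht, Complex.exp_neg]
      field_simp [Complex.exp_ne_zero]
    rw [← hval]
    exact hBd.hasDerivWithinAt.congr (fun x hx => htweq x hx) (htweq t ht)
  · -- bound
    intro Cr hCr t ht
    have hφa : (0:ℝ) < (φ a).re := lt_of_lt_of_le hε (hφ a ha)
    have hCr0 : (0:ℝ) < Cr :=
      lt_of_lt_of_le (by positivity : (0:ℝ) < |1 / (φ a).re|) (hCr a ha)
    have hδ : (0:ℝ) < Cr⁻¹ := inv_pos.2 hCr0
    have hδψ : ∀ u, Cr⁻¹ ≤ (ψ u).re := by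
      intro u
      have h2 := hφ _ (hmax u)
      have hpos : (0:ℝ) < (φ (max u a)).re := lt_of_lt_of_le hε h2
      have h1 := hCr _ (hmax u)
      rw [abs_of_pos (by positivity)] at h1
      have := (one_div_le hpos hCr0).mp h1
      simpa [one_div] using this
    set c : ℝ := (F t).re with hcdef
    set M : ℝ → ℝ := fun s => (Cf * Real.exp (-c) * Real.exp (Cr⁻¹ * t)) *
      Real.exp (-Cr⁻¹ * s) with hMdef
    have hMint : IntegrableOn M (Set.Ioi t) :=
      (exp_neg_integrableOn_Ioi t hδ).const_mul _
    have hgnint : IntegrableOn (fun s => ‖g s‖) (Set.Ioi t) :=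
      (hgint.mono_set (hIoisub t ht)).norm
    have hle : ∀ s ∈ Set.Ioi t, ‖g s‖ ≤ M s := by
      intro s hs
      have h1 := hgnorm Cr⁻¹ hδψ t s (le_of_lt hs)
      calc ‖g s‖ ≤ Cf * Real.exp (-c - Cr⁻¹ * (s - t)) := h1
        _ = M s := by
            rw [hMdef]; dsimp only
            rw [mul_assoc, mul_assoc, ← Real.exp_add, ← Real.exp_add]
            congr 2; ring
    have hIM : (∫ s in Set.Ioi t, M s)
        = (Cf * Real.exp (-c) * Real.exp (Cr⁻¹ * t)) * (Cr * Real.exp (-(Cr⁻¹ * t))) := by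
      rw [hMdef]
      dsimp only
      rw [MeasureTheory.integral_const_mul]
      congr 1
      have : (∫ s in Set.Ioi t, Real.exp (-Cr⁻¹ * s))
          = ∫ s in Set.Ioi t, (fun y => Real.exp (-y)) (Cr⁻¹ * s) := by
        refine setIntegral_congr_fun measurableSet_Ioi fun s _ => ?_
        simp [neg_mul]
      rw [this, MeasureTheory.integral_comp_mul_left_Ioi (fun y => Real.exp (-y)) t hδ,
        integral_exp_neg_Ioi, smul_eq_mul, inv_inv]
    have hnorm1 : ‖twistIntR a φ f t‖ = Real.exp c * ‖∫ s in Set.Ioi t, g s‖ := by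
      rw [twistIntR, hFeq t ht]
      have hin : (∫ s in Set.Ioi t, Complex.exp (-(∫ u in a..s, φ u)) * f s)
          = ∫ s in Set.Ioi t, g s :=
        MeasureTheory.setIntegral_congr_fun measurableSet_Ioi
          (fun s hs => hgeq s (hIoisub t ht hs))
      rw [hin, norm_mul, norm_neg, Complex.norm_exp]
    have hIbound : ‖∫ s in Set.Ioi t, g s‖ ≤ ∫ s in Set.Ioi t, M s := by
      refine le_trans (norm_integral_le_integral_norm _) ?_
      exact setIntegral_mono_on hgnint hMint measurableSet_Ioi hle
    rw [hnorm1]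
    calc Real.exp c * ‖∫ s in Set.Ioi t, g s‖
        ≤ Real.exp c * ((Cf * Real.exp (-c) * Real.exp (Cr⁻¹ * t)) *
            (Cr * Real.exp (-(Cr⁻¹ * t)))) := by
          rw [← hIM]
          exact mul_le_mul_of_nonneg_left hIbound (Real.exp_nonneg _)
      _ = Cf * Cr := by
          rw [Real.exp_neg, Real.exp_neg]
          field_simp
end

section
/- Let K be a differential field (of characteristic 0), P ∈ K{Y} an irreducible differential polynomial of order r ≥ 1 (viewing P as a polynomial in Y, Y', ..., Y^{(r)}), and E a differential ring extension of K containing an element y with P(y) = 0 and Q(y) a unit of E for every nonzero differential polynomial Q over K of order < r. Then y generates a differential subfield K⟨y⟩ of E containing K, P is a minimal annihilator of y over K, and K⟨y⟩ = { A(y)/B(y) : A, B ∈ K{Y}, order A ≤ r, deg_{Y^{(r)}} A < deg_{Y^{(r)}} P, B ≠ 0, order B < r }. -/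
open MvPolynomial

lemma stmt15_aux_finSuccEquiv_pderiv {R : Type*} [CommRing R] {n : ℕ}
    (Q : MvPolynomial (Fin (n + 1)) R) :
    MvPolynomial.finSuccEquiv R n (MvPolynomial.pderiv 0 Q) =
      Polynomial.derivative (MvPolynomial.finSuccEquiv R n Q) := by
  induction Q using MvPolynomial.induction_on with
  | C a => simp [finSuccEquiv_apply, pderiv_C]
  | add p q hp hq => simp [hp, hq]
  | mul_X p i hp =>
    induction i using Fin.cases with
    | zero =>
      simp only [pderiv_mul, pderiv_X_self, mul_one, map_add, map_mul,
        finSuccEquiv_X_zero, hp, Polynomial.derivative_mul, Polynomial.derivative_X]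
    | succ j =>
      simp only [pderiv_mul, pderiv_X_of_ne (Fin.succ_ne_zero j), mul_zero, add_zero,
        map_mul, hp, finSuccEquiv_X_succ, Polynomial.derivative_mul, Polynomial.derivative_C]

lemma stmt15_aux_degreeOf_rename_castSucc {K : Type*} [CommRing K] {r : ℕ}
    (b : MvPolynomial (Fin r) K) :
    (MvPolynomial.rename (Fin.castSucc : Fin r → Fin (r + 1)) b).degreeOf (Fin.last r) = 0 := by
  classical
  rw [degreeOf_eq_sup]
  have h : ((MvPolynomial.rename (Fin.castSucc : Fin r → Fin (r + 1)) b).support.sup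
      fun m => m (Fin.last r)) ≤ 0 := by
    refine Finset.sup_le fun m hm => ?_
    rw [MvPolynomial.support_rename_of_injective (Fin.castSucc_injective r)] at hm
    obtain ⟨s, _, rfl⟩ := Finset.mem_image.mp hm
    rw [Finsupp.mapDomain_notin_range]
    rintro ⟨j, hj⟩
    exact absurd hj (Fin.castSucc_lt_last j).ne
  exact Nat.le_zero.mp h


set_option maxHeartbeats 1000000 in
/-- Differential polynomials of order `≤ r` over `K` are modeled as multivariate
polynomials in the variables `Y, Y', …, Y^{(r)}` (indexed by `Fin (r+1)`), evaluated at
the iterated derivatives of an element `y` of a differential ring extension `E` of `K`.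

If `P` is irreducible of order `r ≥ 1` with `P(y) = 0`, and `Q(y)` is a unit of `E` for
every nonzero differential polynomial `Q` over `K` of order `< r`, then `y` generates a
differential subfield `K⟨y⟩` of `E` containing `K`, `P` is a minimal annihilator of `y`
over `K`, and `K⟨y⟩` consists of the quotients `A(y)/B(y)` with `order A ≤ r`,
`deg_{Y^{(r)}} A < deg_{Y^{(r)}} P`, `B ≠ 0`, `order B < r`. -/
theorem stmt15 {K E : Type*} [Field K] [CharZero K] [CommRing E] [Nontrivial E]
    [Algebra K E] (hinj : Function.Injective (algebraMap K E))
    (dK : Derivation ℤ K K) (dE : Derivation ℤ E E)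
    (hcompat : ∀ x : K, dE (algebraMap K E x) = algebraMap K E (dK x))
    (r : ℕ) (hr : 1 ≤ r)
    (P : MvPolynomial (Fin (r + 1)) K) (hPirr : Irreducible P)
    (hPord : 0 < P.degreeOf (Fin.last r))
    (y : E)
    (hPy : (MvPolynomial.aeval (fun i : Fin (r + 1) => (⇑dE)^[(i : ℕ)] y)) P = 0)
    (hunits : ∀ Q : MvPolynomial (Fin r) K, Q ≠ 0 →
      IsUnit ((MvPolynomial.aeval (fun i : Fin r => (⇑dE)^[(i : ℕ)] y)) Q)) :
    ∃ F : Subring E,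
      -- K⟨y⟩ contains K and y, and is closed under the derivation
      (∀ c : K, algebraMap K E c ∈ F) ∧ y ∈ F ∧ (∀ e ∈ F, dE e ∈ F) ∧
      -- K⟨y⟩ is a field
      (∀ e ∈ F, e ≠ 0 → ∃ e' ∈ F, e * e' = 1) ∧
      -- description of K⟨y⟩ as the set of quotients A(y)/B(y)
      (∀ e : E, e ∈ F ↔ ∃ A B : MvPolynomial (Fin (r + 1)) K,
        A.degreeOf (Fin.last r) < P.degreeOf (Fin.last r) ∧
        B ≠ 0 ∧ B.degreeOf (Fin.last r) = 0 ∧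
        e * (MvPolynomial.aeval (fun i : Fin (r + 1) => (⇑dE)^[(i : ℕ)] y)) B =
          (MvPolynomial.aeval (fun i : Fin (r + 1) => (⇑dE)^[(i : ℕ)] y)) A) ∧
      -- P is a minimal annihilator of y over K
      (∀ Q : MvPolynomial (Fin (r + 1)) K, Q ≠ 0 →
        (MvPolynomial.aeval (fun i : Fin (r + 1) => (⇑dE)^[(i : ℕ)] y)) Q = 0 →
        P.degreeOf (Fin.last r) ≤ Q.degreeOf (Fin.last r)) := by
  classical
  set v : Fin (r + 1) → E := fun i => (⇑dE)^[(i : ℕ)] y with hv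
  set w : Fin r → E := fun i => (⇑dE)^[(i : ℕ)] y with hw
  letI : NormalizationMonoid (MvPolynomial (Fin r) K) :=
    UniqueFactorizationMonoid.normalizationMonoid.toNormalizationMonoid
  letI : NormalizedGCDMonoid (MvPolynomial (Fin r) K) :=
    UniqueFactorizationMonoid.toNormalizedGCDMonoid _
  set L := FractionRing (MvPolynomial (Fin r) K) with hL
  set Θ : MvPolynomial (Fin (r + 1)) K ≃ₐ[K] Polynomial (MvPolynomial (Fin r) K) :=
    (renameEquiv K (finRotate (r + 1))).trans (MvPolynomial.finSuccEquiv K r) with hΘdef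
  -- degree correspondence
  have hnd' : ∀ Q : MvPolynomial (Fin (r + 1)) K,
      (Θ Q).natDegree = Q.degreeOf (Fin.last r) := by
    intro Q
    show ((MvPolynomial.finSuccEquiv K r) (rename (finRotate (r + 1)) Q)).natDegree = _
    rw [natDegree_finSuccEquiv]
    have h := degreeOf_rename_of_injective (p := Q)
      (f := finRotate (r + 1)) (finRotate (r + 1)).injective (Fin.last r)
    rw [finRotate_last] at h
    exact h
  have hndeg : ∀ Q : MvPolynomial (Fin (r + 1)) K,
      ((Θ Q).map (algebraMap (MvPolynomial (Fin r) K) L)).natDegree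
        = Q.degreeOf (Fin.last r) := by
    intro Q
    rw [Polynomial.natDegree_map_eq_of_injective (IsFractionRing.injective _ _), hnd' Q]
  have hΘne : ∀ Q : MvPolynomial (Fin (r + 1)) K, Q ≠ 0 →
      (Θ Q).map (algebraMap (MvPolynomial (Fin r) K) L) ≠ 0 := by
    intro Q hQ h
    have h1 : Θ Q = 0 :=
      Polynomial.map_injective _ (IsFractionRing.injective _ _) (by simpa using h)
    exact hQ (by simpa using Θ.injective (h1.trans (map_zero Θ).symm))
  set P' : Polynomial L := (Θ P).map (algebraMap (MvPolynomial (Fin r) K) L) with hP'def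
  have hP'nd : P'.natDegree = P.degreeOf (Fin.last r) := hndeg P
  have hP'ne : P' ≠ 0 := hΘne P hPirr.ne_zero
  -- irreducibility of P'
  have hΘPirr : Irreducible (Θ P) := (MulEquiv.irreducible_iff Θ).mpr hPirr
  have hprim : (Θ P).IsPrimitive := by
    intro c hc
    obtain ⟨q, hq⟩ := hc
    rcases hΘPirr.isUnit_or_isUnit hq with h | h
    · exact Polynomial.isUnit_C.mp h
    · exfalso
      have h1 : (Θ P).natDegree = 0 := by
        rw [hq]
        have := Polynomial.natDegree_mul_le (p := Polynomial.C c) (q := q)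
        simp [Polynomial.natDegree_eq_zero_of_isUnit h] at this
        omega
      rw [hnd' P] at h1
      omega
  have hP'irr : Irreducible P' :=
    (Polynomial.IsPrimitive.irreducible_iff_irreducible_map_fraction_map hprim).mp hΘPirr
  haveI : Fact (Irreducible P') := ⟨hP'irr⟩
  -- localization lift
  have hfunit : ∀ s : nonZeroDivisors (MvPolynomial (Fin r) K),
      IsUnit ((MvPolynomial.aeval w : MvPolynomial (Fin r) K →ₐ[K] E).toRingHom s) := by
    rintro ⟨s, hs⟩
    exact hunits s (mem_nonZeroDivisors_iff_ne_zero.mp hs)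
  set fL : L →+* E := IsLocalization.lift hfunit with hfLdef
  have hfLa : ∀ s : MvPolynomial (Fin r) K,
      fL (algebraMap (MvPolynomial (Fin r) K) L s) = MvPolynomial.aeval w s :=
    fun s => IsLocalization.lift_eq hfunit s
  set t : E := (⇑dE)^[r] y with ht
  -- the evaluation homomorphism
  have hΦX : ∀ i : Fin (r + 1),
      Polynomial.eval₂ fL t ((Θ (X i)).map (algebraMap (MvPolynomial (Fin r) K) L)) = v i := by
    intro i
    induction i using Fin.lastCases with
    | last =>
      have h1 : Θ (X (Fin.last r)) = Polynomial.X := by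
        show (MvPolynomial.finSuccEquiv K r) (rename (finRotate (r + 1)) (X (Fin.last r))) = _
        rw [rename_X, finRotate_last, finSuccEquiv_X_zero]
      rw [h1, Polynomial.map_X, Polynomial.eval₂_X]
      simp [hv, ht, Fin.val_last]
    | cast j =>
      have h1 : Θ (X (Fin.castSucc j)) = Polynomial.C (MvPolynomial.X j) := by
        show (MvPolynomial.finSuccEquiv K r)
          (rename (finRotate (r + 1)) (X (Fin.castSucc j))) = _
        rw [rename_X, finRotate_succ_apply, Fin.coeSucc_eq_succ, finSuccEquiv_X_succ]
      rw [h1, Polynomial.map_C, Polynomial.eval₂_C, hfLa]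
      simp [hv, hw, Fin.coe_castSucc]
  have hΦ₀ : ∀ Q : MvPolynomial (Fin (r + 1)) K,
      Polynomial.eval₂ fL t ((Θ Q).map (algebraMap (MvPolynomial (Fin r) K) L))
        = MvPolynomial.aeval v Q := by
    intro Q
    induction Q using MvPolynomial.induction_on with
    | C a =>
      have h1 : Θ (C a) = Polynomial.C (MvPolynomial.C a) := by
        show (MvPolynomial.finSuccEquiv K r) (rename (finRotate (r + 1)) (C a)) = _
        simp [finSuccEquiv_apply]
      rw [h1, Polynomial.map_C, Polynomial.eval₂_C, hfLa]
      simp [aeval_C]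
    | add p q hp hq =>
      rw [map_add, Polynomial.map_add, Polynomial.eval₂_add, hp, hq, map_add]
    | mul_X p i hp =>
      rw [map_mul, Polynomial.map_mul, Polynomial.eval₂_mul, hp, hΦX i, map_mul, aeval_X]
  have hP'0 : Polynomial.eval₂ fL t P' = 0 := by rw [hP'def, hΦ₀ P, hPy]
  set ψ : AdjoinRoot P' →+* E := AdjoinRoot.lift fL t hP'0 with hψdef
  have hψinj : Function.Injective ψ := ψ.injective
  set χ : MvPolynomial (Fin (r + 1)) K → AdjoinRoot P' :=
    fun Q => AdjoinRoot.mk P' ((Θ Q).map (algebraMap (MvPolynomial (Fin r) K) L)) with hχdef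
  have hψχ : ∀ Q : MvPolynomial (Fin (r + 1)) K, ψ (χ Q) = MvPolynomial.aeval v Q := by
    intro Q
    rw [hχdef, hψdef]
    show AdjoinRoot.lift fL t hP'0 (AdjoinRoot.mk P' _) = _
    rw [AdjoinRoot.lift_mk, hΦ₀ Q]
  set F : Subring E := ψ.range with hFdef
  have hmemF : ∀ Q : MvPolynomial (Fin (r + 1)) K, MvPolynomial.aeval v Q ∈ F :=
    fun Q => ⟨χ Q, hψχ Q⟩
  have hvF : ∀ i : Fin (r + 1), v i ∈ F := fun i => by
    simpa [aeval_X] using hmemF (X i)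
  have hKF : ∀ c : K, algebraMap K E c ∈ F := fun c => by
    simpa [aeval_C] using hmemF (C c)
  have hofψ : ∀ x : L, ψ (AdjoinRoot.of P' x) = fL x := by
    intro x
    show ψ (AdjoinRoot.mk P' (Polynomial.C x)) = fL x
    rw [hψdef]
    show AdjoinRoot.lift fL t hP'0 (AdjoinRoot.mk P' _) = _
    rw [AdjoinRoot.lift_mk, Polynomial.eval₂_C]
  have hofS : ∀ s : MvPolynomial (Fin r) K,
      ψ (AdjoinRoot.of P' (algebraMap (MvPolynomial (Fin r) K) L s)) = MvPolynomial.aeval w s :=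
    fun s => by rw [hofψ, hfLa]
  have hinvF : ∀ s : MvPolynomial (Fin r) K, s ≠ 0 →
      ∃ u ∈ F, MvPolynomial.aeval w s * u = 1 := by
    intro s hs
    have hsL : algebraMap (MvPolynomial (Fin r) K) L s ≠ 0 :=
      (map_ne_zero_iff _ (IsFractionRing.injective _ _)).mpr hs
    refine ⟨ψ (AdjoinRoot.of P' (algebraMap (MvPolynomial (Fin r) K) L s)⁻¹),
      RingHom.mem_range_self ψ _, ?_⟩
    rw [← hofS s, ← map_mul ψ, ← map_mul, mul_inv_cancel₀ hsL, map_one, map_one]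
  -- representation of elements of the adjoined field
  have hrep : ∀ m : AdjoinRoot P', ∃ (A : MvPolynomial (Fin (r + 1)) K)
      (b : MvPolynomial (Fin r) K), b ≠ 0 ∧
      A.degreeOf (Fin.last r) < P.degreeOf (Fin.last r) ∧
      ψ m * MvPolynomial.aeval w b = MvPolynomial.aeval v A := by
    intro m
    obtain ⟨g, rfl⟩ := AdjoinRoot.mk_surjective m
    set g₁ : Polynomial L := g % P' with hg₁
    have hmk : AdjoinRoot.mk P' g₁ = AdjoinRoot.mk P' g := by
      rw [AdjoinRoot.mk_eq_mk]
      exact ⟨-(g / P'), by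
        rw [hg₁, mul_neg]; linear_combination EuclideanDomain.mod_add_div g P'⟩
    obtain ⟨b, hb⟩ := IsLocalization.integerNormalization_map_to_map
      (nonZeroDivisors (MvPolynomial (Fin r) K)) g₁
    have hA2map : (IsLocalization.integerNormalization
        (nonZeroDivisors (MvPolynomial (Fin r) K)) g₁).map
          (algebraMap (MvPolynomial (Fin r) K) L)
        = Polynomial.C (algebraMap (MvPolynomial (Fin r) K) L (b : MvPolynomial (Fin r) K))
          * g₁ := by
      rw [hb, Algebra.smul_def, Polynomial.algebraMap_apply]
    set A₂ : Polynomial (MvPolynomial (Fin r) K) :=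
      IsLocalization.integerNormalization (nonZeroDivisors (MvPolynomial (Fin r) K)) g₁
    have hdegA2 : A₂.natDegree < P.degreeOf (Fin.last r) := by
      rw [← Polynomial.natDegree_map_eq_of_injective
        (IsFractionRing.injective (MvPolynomial (Fin r) K) L), hA2map]
      by_cases h0 : g₁ = 0
      · simpa [h0] using hPord
      · have hd : g₁.degree < P'.degree := EuclideanDomain.mod_lt g hP'ne
        have h2 : g₁.natDegree < P'.natDegree := Polynomial.natDegree_lt_natDegree h0 hd
        calc (Polynomial.C (algebraMap (MvPolynomial (Fin r) K) L
                (b : MvPolynomial (Fin r) K)) * g₁).natDegree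
            ≤ g₁.natDegree := by
              refine le_trans (Polynomial.natDegree_mul_le) ?_
              simp
          _ < P'.natDegree := h2
          _ = P.degreeOf (Fin.last r) := hP'nd
    refine ⟨Θ.symm A₂, b, mem_nonZeroDivisors_iff_ne_zero.mp b.2, ?_, ?_⟩
    · calc (Θ.symm A₂).degreeOf (Fin.last r) = (Θ (Θ.symm A₂)).natDegree := (hnd' _).symm
        _ = A₂.natDegree := by rw [AlgEquiv.apply_symm_apply]
        _ < P.degreeOf (Fin.last r) := hdegA2
    · have hχA : χ (Θ.symm A₂)
          = AdjoinRoot.of P' (algebraMap (MvPolynomial (Fin r) K) L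
              (b : MvPolynomial (Fin r) K)) * AdjoinRoot.mk P' g := by
        rw [hχdef]
        show AdjoinRoot.mk P' ((Θ (Θ.symm A₂)).map (algebraMap (MvPolynomial (Fin r) K) L)) = _
        rw [AlgEquiv.apply_symm_apply, hA2map, map_mul, hmk]
        rfl
      have := hψχ (Θ.symm A₂)
      rw [hχA, map_mul, hofS] at this
      rw [← this]
      ring
  -- facts about the partial derivative of P
  have hΘpd : Θ (pderiv (Fin.last r) P) = Polynomial.derivative (Θ P) := by
    have h1 : rename (finRotate (r + 1)) (pderiv (Fin.last r) P)
        = pderiv 0 (rename (finRotate (r + 1)) P) := by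
      have h := pderiv_rename (f := finRotate (r + 1)) (finRotate (r + 1)).injective
        (Fin.last r) P
      rw [finRotate_last] at h
      exact h.symm
    show (MvPolynomial.finSuccEquiv K r) (rename (finRotate (r + 1)) (pderiv (Fin.last r) P)) = _
    rw [h1, stmt15_aux_finSuccEquiv_pderiv]
    rfl
  have hpdne : pderiv (Fin.last r) P ≠ 0 := by
    intro h
    have h1 : Polynomial.derivative (Θ P) = 0 := by rw [← hΘpd, h, map_zero]
    have h2 := Polynomial.natDegree_eq_zero_of_derivative_eq_zero h1
    rw [hnd' P] at h2
    omega
  have hpddeg : (pderiv (Fin.last r) P).degreeOf (Fin.last r) < P.degreeOf (Fin.last r) := by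
    rw [← hnd' (pderiv (Fin.last r) P), ← hnd' P, hΘpd]
    refine Polynomial.natDegree_derivative_lt ?_
    rw [hnd' P]
    omega
  have hχpd : χ (pderiv (Fin.last r) P) ≠ 0 := by
    intro h
    rw [hχdef] at h
    have hdvd := AdjoinRoot.mk_eq_zero.mp h
    have hne := hΘne _ hpdne
    have hle := Polynomial.natDegree_le_of_dvd hdvd hne
    rw [hP'nd, hndeg _] at hle
    omega
  -- chain rule for the derivation
  have hD1 : ∀ Q : MvPolynomial (Fin (r + 1)) K, ∃ a ∈ F,
      dE (MvPolynomial.aeval v Q) = a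
        + MvPolynomial.aeval v (pderiv (Fin.last r) Q) * dE (v (Fin.last r)) := by
    intro Q
    induction Q using MvPolynomial.induction_on with
    | C c =>
      refine ⟨algebraMap K E (dK c), hKF _, ?_⟩
      simp [aeval_C, hcompat c, pderiv_C]
    | add p q hp hq =>
      obtain ⟨a, haF, ha⟩ := hp
      obtain ⟨b, hbF, hb⟩ := hq
      refine ⟨a + b, F.add_mem haF hbF, ?_⟩
      rw [map_add, map_add, ha, hb, map_add, map_add]
      ring
    | mul_X p i hp =>
      obtain ⟨a, haF, ha⟩ := hp
      have hleib : dE (MvPolynomial.aeval v (p * X i))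
          = MvPolynomial.aeval v p * dE (v i) + v i * dE (MvPolynomial.aeval v p) := by
        rw [map_mul, aeval_X, Derivation.leibniz]
        simp [smul_eq_mul]
      induction i using Fin.lastCases with
      | last =>
        refine ⟨v (Fin.last r) * a, F.mul_mem (hvF _) haF, ?_⟩
        rw [hleib, ha, pderiv_mul, pderiv_X_self, mul_one, map_add, map_mul, aeval_X]
        ring
      | cast j =>
        have hdvi : dE (v (Fin.castSucc j)) = v j.succ := by
          show dE ((⇑dE)^[((Fin.castSucc j : ℕ))] y) = (⇑dE)^[(j.succ : ℕ)] y
          rw [Fin.coe_castSucc, Fin.val_succ, Function.iterate_succ_apply']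
        refine ⟨MvPolynomial.aeval v p * v j.succ + v (Fin.castSucc j) * a,
          F.add_mem (F.mul_mem (hmemF p) (hvF _)) (F.mul_mem (hvF _) haF), ?_⟩
        rw [hleib, ha, hdvi, pderiv_mul,
          pderiv_X_of_ne (Fin.castSucc_lt_last j).ne, mul_zero, add_zero, map_mul, aeval_X]
        ring
  -- the (r+1)-st derivative of y lies in F
  have hDF : dE (v (Fin.last r)) ∈ F := by
    obtain ⟨a, haF, ha⟩ := hD1 P
    rw [hPy, map_zero] at ha
    have hcinv : ∃ u ∈ F, MvPolynomial.aeval v (pderiv (Fin.last r) P) * u = 1 := by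
      refine ⟨ψ (χ (pderiv (Fin.last r) P))⁻¹, RingHom.mem_range_self ψ _, ?_⟩
      rw [← hψχ (pderiv (Fin.last r) P), ← map_mul, mul_inv_cancel₀ hχpd, map_one]
    obtain ⟨u, huF, hu⟩ := hcinv
    have h2 : MvPolynomial.aeval v (pderiv (Fin.last r) P) * dE (v (Fin.last r)) = -a := by
      linear_combination -ha
    have h3 : dE (v (Fin.last r)) = -(u * a) := by
      calc dE (v (Fin.last r))
          = (MvPolynomial.aeval v (pderiv (Fin.last r) P) * u) * dE (v (Fin.last r)) := by
            rw [hu, one_mul]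
        _ = u * (MvPolynomial.aeval v (pderiv (Fin.last r) P) * dE (v (Fin.last r))) := by ring
        _ = u * (-a) := by rw [h2]
        _ = -(u * a) := by ring
    rw [h3]
    exact F.neg_mem (F.mul_mem huF haF)
  have hdF : ∀ Q : MvPolynomial (Fin (r + 1)) K, dE (MvPolynomial.aeval v Q) ∈ F := by
    intro Q
    obtain ⟨a, haF, ha⟩ := hD1 Q
    rw [ha]
    exact F.add_mem haF (F.mul_mem (hmemF _) hDF)
  have hwv : ∀ b : MvPolynomial (Fin r) K,
      MvPolynomial.aeval v (rename (Fin.castSucc : Fin r → Fin (r + 1)) b)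
        = MvPolynomial.aeval w b := by
    intro b
    have hcomp : v ∘ (Fin.castSucc : Fin r → Fin (r + 1)) = w := by
      funext j
      simp [hv, hw, Fin.coe_castSucc]
    rw [aeval_rename, hcomp]
  refine ⟨F, hKF, ?_, ?_, ?_, ?_, ?_⟩
  · -- y ∈ F
    have h0 := hvF 0
    simpa [hv] using h0
  · -- closed under the derivation
    intro e he
    obtain ⟨m, rfl⟩ := RingHom.mem_range.mp he
    obtain ⟨A, b, hb0, hdegA, heq⟩ := hrep m
    obtain ⟨u, huF, hu⟩ := hinvF b hb0
    have he' : ψ m = MvPolynomial.aeval v A * u := by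
      calc ψ m = ψ m * (MvPolynomial.aeval w b * u) := by rw [hu, mul_one]
        _ = (ψ m * MvPolynomial.aeval w b) * u := by ring
        _ = MvPolynomial.aeval v A * u := by rw [heq]
    have hβF : dE (MvPolynomial.aeval w b) ∈ F := by
      rw [← hwv b]; exact hdF _
    have hdu : dE u ∈ F := by
      have h2 : dE (MvPolynomial.aeval w b * u) = 0 := by
        rw [hu]; exact dE.map_one_eq_zero
      have h3 : MvPolynomial.aeval w b * dE u + u * dE (MvPolynomial.aeval w b) = 0 := by
        rw [← h2, Derivation.leibniz]
        simp [smul_eq_mul]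
      have h4 : dE u = -(u * u * dE (MvPolynomial.aeval w b)) := by
        calc dE u = (MvPolynomial.aeval w b * u) * dE u := by rw [hu, one_mul]
          _ = u * (MvPolynomial.aeval w b * dE u) := by ring
          _ = u * (-(u * dE (MvPolynomial.aeval w b))) := by
              rw [show MvPolynomial.aeval w b * dE u = -(u * dE (MvPolynomial.aeval w b)) from
                by linear_combination h3]
          _ = -(u * u * dE (MvPolynomial.aeval w b)) := by ring
      rw [h4]
      exact F.neg_mem (F.mul_mem (F.mul_mem huF huF) hβF)
    rw [he', Derivation.leibniz]
    simp only [smul_eq_mul]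
    exact F.add_mem (F.mul_mem (hmemF A) hdu) (F.mul_mem huF (hdF A))
  · -- F is a field
    intro e he hne
    obtain ⟨m, rfl⟩ := RingHom.mem_range.mp he
    have hm : m ≠ 0 := by rintro rfl; exact hne (map_zero ψ)
    exact ⟨ψ m⁻¹, RingHom.mem_range_self ψ _, by
      rw [← map_mul, mul_inv_cancel₀ hm, map_one]⟩
  · -- description of F
    intro e
    constructor
    · intro he
      obtain ⟨m, rfl⟩ := RingHom.mem_range.mp he
      obtain ⟨A, b, hb0, hdegA, heq⟩ := hrep m
      refine ⟨A, rename Fin.castSucc b, hdegA, ?_, stmt15_aux_degreeOf_rename_castSucc b, ?_⟩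
      · intro h
        exact hb0 ((map_eq_zero_iff _
          (rename_injective _ (Fin.castSucc_injective r))).mp h)
      · rw [hwv b]
        exact heq
    · rintro ⟨A, B, hdegA, hB0, hBdeg, heq⟩
      have hBnat : (Θ B).natDegree = 0 := by rw [hnd' B, hBdeg]
      obtain ⟨s, hs⟩ := Polynomial.natDegree_eq_zero.mp hBnat
      have hsne : s ≠ 0 := by
        rintro rfl
        apply hB0
        have : Θ B = 0 := by rw [← hs, map_zero]
        simpa using Θ.injective (this.trans (map_zero Θ).symm)
      have hfB : MvPolynomial.aeval v B = MvPolynomial.aeval w s := by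
        rw [← hψχ B, hχdef]
        show ψ (AdjoinRoot.mk P' ((Θ B).map (algebraMap (MvPolynomial (Fin r) K) L))) = _
        rw [← hs, Polynomial.map_C]
        exact hofS s
      obtain ⟨u, huF, hu⟩ := hinvF s hsne
      have he' : e = MvPolynomial.aeval v A * u := by
        calc e = e * (MvPolynomial.aeval w s * u) := by rw [hu, mul_one]
          _ = (e * MvPolynomial.aeval v B) * u := by rw [hfB]; ring
          _ = MvPolynomial.aeval v A * u := by rw [heq]
      rw [he']
      exact F.mul_mem (hmemF A) huF
  · -- minimality
    intro Q hQ0 hQy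
    have hχQ : χ Q = 0 := hψinj (by rw [hψχ Q, hQy, map_zero])
    rw [hχdef] at hχQ
    have hdvd := AdjoinRoot.mk_eq_zero.mp hχQ
    have hle := Polynomial.natDegree_le_of_dvd hdvd (hΘne Q hQ0)
    rw [hP'nd, hndeg Q] at hle
    exact hle
end
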